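/- For a simple, properly ordered Bratteli-Vershik system (X,T), the following statements are equivalent: (1) there are infinitely many k >= 1 for which there exists a depth k pair of paths having a j cut for every j > k; (2) some telescoping of (X,T) is very well timed; (3) (X,T) is conjugate to a very well timed system. -/

import Mathlib

set_option autoImplicit false

/-- An ordered Bratteli diagram: finite nonempty vertex sets `V n`, a single root
vertex at level `0`, finite edge sets `E n` (edges from level `n` to level `n+1`,
multiple edges allowed), every vertex has an outgoing edge, every non-root vertex
an incoming edge, and the edges into each vertex carry a linear order, encoded by
the relation `elt` which relates only edges with the same target. -/
structure BDiagram where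
  V : ℕ → Type
  E : ℕ → Type
  fintV : ∀ n, Fintype (V n)
  fintE : ∀ n, Fintype (E n)
  nonV : ∀ n, Nonempty (V n)
  rootSubsingleton : Subsingleton (V 0)
  src : ∀ {n}, E n → V n
  tgt : ∀ {n}, E n → V (n + 1)
  hasOut : ∀ (n : ℕ) (v : V n), ∃ e : E n, src e = v
  hasIn : ∀ (n : ℕ) (v : V (n + 1)), ∃ e : E n, tgt e = v
  elt : ∀ {n}, E n → E n → Prop
  elt_tgt : ∀ (n : ℕ) (e f : E n), elt e f → tgt e = tgt f
  elt_irrefl : ∀ (n : ℕ) (e : E n), ¬ elt e e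
  elt_trans : ∀ (n : ℕ) (e f g : E n), elt e f → elt f g → elt e g
  elt_total : ∀ (n : ℕ) (e f : E n), tgt e = tgt f → e ≠ f → elt e f ∨ elt f e

namespace BDiagram

variable (B : BDiagram)

def castV {m n : ℕ} (h : m = n) (v : B.V m) : B.V n := h ▸ v

/-- An edge is minimal if no edge (into the same target) is below it. -/
def IsMinEdge {n : ℕ} (e : B.E n) : Prop := ∀ e' : B.E n, ¬ B.elt e' e

/-- An edge is maximal if no edge (into the same target) is above it. -/
def IsMaxEdge {n : ℕ} (e : B.E n) : Prop := ∀ e' : B.E n, ¬ B.elt e e'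

/-- The space of infinite paths from the root. -/
def PathSpace : Type := { x : ∀ n, B.E n // ∀ n, B.tgt (x n) = B.src (x (n + 1)) }

def IsMinPath (x : B.PathSpace) : Prop := ∀ n, B.IsMinEdge (x.1 n)

def IsMaxPath (x : B.PathSpace) : Prop := ∀ n, B.IsMaxEdge (x.1 n)

/-- Properly ordered: unique minimal and unique maximal path. -/
def ProperlyOrdered : Prop :=
  (∃! x : B.PathSpace, B.IsMinPath x) ∧ (∃! x : B.PathSpace, B.IsMaxPath x)

/-- The partial order on cofinal paths: `x < y` iff they eventually agree and at the
last disagreement the edge of `x` is below the edge of `y`. -/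
def pathLT (x y : B.PathSpace) : Prop :=
  ∃ N : ℕ, B.elt (x.1 N) (y.1 N) ∧ ∀ n : ℕ, N < n → x.1 n = y.1 n

/-- `T` is the Vershik map: each non-maximal path goes to its successor, and each
maximal path goes to a minimal path. -/
def IsVershik (T : B.PathSpace ≃ B.PathSpace) : Prop :=
  (∀ x : B.PathSpace, ¬ B.IsMaxPath x →
    B.pathLT x (T x) ∧ ∀ z : B.PathSpace, B.pathLT x z → ¬ B.pathLT z (T x)) ∧
  (∀ x : B.PathSpace, B.IsMaxPath x → B.IsMinPath (T x))

/-- `f` is a chain of consecutive edges on levels `[a, b)`. -/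
def SegOn (f : ∀ i, B.E i) (a b : ℕ) : Prop :=
  ∀ i : ℕ, a ≤ i → i + 1 < b → B.tgt (f i) = B.src (f (i + 1))

/-- Simplicity: some telescoping has complete connections between adjacent levels. -/
def Simple : Prop :=
  ∃ ns : ℕ → ℕ, StrictMono ns ∧ ns 0 = 0 ∧
    ∀ (l c : ℕ), ns (l + 1) = c + 1 →
      ∀ (v : B.V (ns l)) (w : B.V (c + 1)),
        ∃ f : ∀ i, B.E i, B.SegOn f (ns l) (c + 1) ∧ B.src (f (ns l)) = v ∧ B.tgt (f c) = w

/-- The natural (Cantor) topology on the path space, induced from the product of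
the discrete topologies on the edge sets. -/
def pathTop : TopologicalSpace B.PathSpace :=
  TopologicalSpace.induced Subtype.val (@Pi.topologicalSpace ℕ B.E (fun _ => ⊥))

/-- Integer iterates of a bijection of the path space. -/
def iterZ (T : B.PathSpace ≃ B.PathSpace) (m : ℤ) : B.PathSpace ≃ B.PathSpace :=
  (T : Equiv.Perm B.PathSpace) ^ m

/-- Two paths have the same `k`-coding: for every time `m` the initial segments of
`T^m x` and `T^m y` from the root to level `k` coincide. -/
def SameCoding (T : B.PathSpace ≃ B.PathSpace) (k : ℕ) (x y : B.PathSpace) : Prop :=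
  ∀ (m : ℤ) (i : ℕ), i < k → ((B.iterZ T m) x).1 i = ((B.iterZ T m) y).1 i

/-- A depth `k` pair: distinct paths with the same `k`-coding but not the same
`(k+1)`-coding. -/
def DepthPair (T : B.PathSpace ≃ B.PathSpace) (k : ℕ) (x y : B.PathSpace) : Prop :=
  x ≠ y ∧ B.SameCoding T k x y ∧ ¬ B.SameCoding T (k + 1) x y

/-- The pair `x, y` has a `j` cut: for some time `m`, both `T^m x` and `T^m y` are
minimal from the root into level `j`. -/
def HasCut (T : B.PathSpace ≃ B.PathSpace) (j : ℕ) (x y : B.PathSpace) : Prop :=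
  ∃ m : ℤ, (∀ i : ℕ, i < j → B.IsMinEdge (((B.iterZ T m) x).1 i)) ∧
    (∀ i : ℕ, i < j → B.IsMinEdge (((B.iterZ T m) y).1 i))

/-- Nonexpansive: for every `k ≥ 1` there are two distinct paths with the same
`k`-coding. -/
def Nonexpansive (T : B.PathSpace ≃ B.PathSpace) : Prop :=
  ∀ k : ℕ, 1 ≤ k → ∃ x y : B.PathSpace, x ≠ y ∧ B.SameCoding T k x y

/-- Well timed: for every `k ≥ 1` and every `j > k` there is a depth `k` pair with
a `j` cut. -/
def WellTimed (T : B.PathSpace ≃ B.PathSpace) : Prop :=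
  ∀ k : ℕ, 1 ≤ k → ∀ j : ℕ, k < j →
    ∃ x y : B.PathSpace, B.DepthPair T k x y ∧ B.HasCut T j x y

/-- Very well timed: for every `k ≥ 1` there is a depth `k` pair having a `j` cut
for every `j > k`. -/
def VeryWellTimed (T : B.PathSpace ≃ B.PathSpace) : Prop :=
  ∀ k : ℕ, 1 ≤ k →
    ∃ x y : B.PathSpace, B.DepthPair T k x y ∧ ∀ j : ℕ, k < j → B.HasCut T j x y

/-- Weakly well timed: for infinitely many `k ≥ 1`, for every `j > k` there is a
depth `k` pair with a `j` cut. -/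
def WeaklyWellTimed (T : B.PathSpace ≃ B.PathSpace) : Prop :=
  ∀ K : ℕ, ∃ k : ℕ, K ≤ k ∧ 1 ≤ k ∧ ∀ j : ℕ, k < j →
    ∃ x y : B.PathSpace, B.DepthPair T k x y ∧ B.HasCut T j x y

/-- Untimed: for every `k ≥ 1` there is a `j > k` such that no depth `k` pair has a
`j` cut. -/
def Untimed (T : B.PathSpace ≃ B.PathSpace) : Prop :=
  ∀ k : ℕ, 1 ≤ k → ∃ j : ℕ, k < j ∧
    ∀ x y : B.PathSpace, B.DepthPair T k x y → ¬ B.HasCut T j x y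

/-- Very untimed: for every `k ≥ 1`, no depth `k` pair has a `(k+1)` cut. -/
def VeryUntimed (T : B.PathSpace ≃ B.PathSpace) : Prop :=
  ∀ k : ℕ, 1 ≤ k →
    ∀ x y : B.PathSpace, B.DepthPair T k x y → ¬ B.HasCut T (k + 1) x y

/-- Finite paths from the root to level `n`. -/
def FinPath (n : ℕ) : Type :=
  { f : (i : Fin n) → B.E i.val //
    ∀ (i : ℕ) (h : i + 1 < n), B.tgt (f ⟨i, by omega⟩) = B.src (f ⟨i + 1, h⟩) }

/-- The lexicographic (from the end) order on finite paths to level `n` induced by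
the orders on the edges. -/
def finLT {n : ℕ} (p q : B.FinPath n) : Prop :=
  ∃ (N : ℕ) (h : N < n), B.elt (p.1 ⟨N, h⟩) (q.1 ⟨N, h⟩) ∧
    ∀ (i : ℕ) (hi : i < n), N < i → p.1 ⟨i, hi⟩ = q.1 ⟨i, hi⟩

/-- The finite path `p` to level `n` ends at the vertex `v`. -/
def EndsAt {n : ℕ} (p : B.FinPath n) (v : B.V n) : Prop :=
  ∀ (m : ℕ) (h : n = m + 1), B.tgt (p.1 ⟨m, by omega⟩) = B.castV h v

/-- The initial segment of an infinite path, from the root to level `n`. -/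
def pathInit (x : B.PathSpace) (n : ℕ) : B.FinPath n :=
  ⟨fun i => x.1 i.val, fun i _ => x.2 i⟩

/-- The vertex of an infinite path at level `n`. -/
def pathVert (x : B.PathSpace) (n : ℕ) : B.V n := B.src (x.1 n)

theorem pathInit_endsAt (x : B.PathSpace) (n : ℕ) :
    B.EndsAt (B.pathInit x n) (B.pathVert x n) := by
  intro m h
  subst h
  exact x.2 m

/-- Truncation of a finite path to a lower level. -/
def truncTo {n : ℕ} (k : ℕ) (hk : k ≤ n) (p : B.FinPath n) : B.FinPath k :=
  ⟨fun i => p.1 ⟨i.val, by omega⟩, fun i h => p.2 i (by omega)⟩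

/-- Paths `x, x'` are `k`-equivalent at level `n`: there is an order isomorphism
between the sets of finite paths from the root into their level-`n` vertices which
preserves truncations to level `k` (equality of `k`-basic blocks) and which matches
the initial segment of `x` with the initial segment of `x'` (the "dot" is in the
same place). -/
def KEquivAt (k n : ℕ) (x x' : B.PathSpace) : Prop :=
  ∃ φ : { p : B.FinPath n // B.EndsAt p (B.pathVert x n) } ≃
      { p : B.FinPath n // B.EndsAt p (B.pathVert x' n) },
    (∀ p q, B.finLT p.1 q.1 ↔ B.finLT (φ p).1 (φ q).1) ∧
    (∀ p (i : ℕ) (hik : i < k) (hin : i < n), ((φ p).1).1 ⟨i, hin⟩ = (p.1).1 ⟨i, hin⟩) ∧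
    φ ⟨B.pathInit x n, B.pathInit_endsAt x n⟩ = ⟨B.pathInit x' n, B.pathInit_endsAt x' n⟩

/-- Paths are `k`-equivalent: they agree from the root to level `k` and are
`k`-equivalent at every level `n > k`. -/
def KEquivPaths (k : ℕ) (x x' : B.PathSpace) : Prop :=
  (∀ i : ℕ, i < k → x.1 i = x'.1 i) ∧ ∀ n : ℕ, k < n → B.KEquivAt k n x x'

/-- Standard nonexpansive: for every `k ≥ 1` there is a pair of distinct
`k`-equivalent paths. -/
def SNE : Prop := ∀ k : ℕ, 1 ≤ k → ∃ x x' : B.PathSpace, x ≠ x' ∧ B.KEquivPaths k x x'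

/-!  ### Telescoping  -/

theorem castV_eq_of_heq {m n : ℕ} (h : m = n) {v : B.V m} {w : B.V n} (hw : HEq v w) :
    B.castV h v = w := by
  subst h
  exact eq_of_heq hw

theorem castV_heq {m n : ℕ} (h : m = n) (v : B.V m) : HEq (B.castV h v) v := by
  subst h
  rfl

theorem castV_inj {m n : ℕ} (h : m = n) {v w : B.V m}
    (hvw : B.castV h v = B.castV h w) : v = w := by
  subst h
  exact hvw

def castE {m n : ℕ} (h : m = n) (e : B.E m) : B.E n := h ▸ e

noncomputable def chainFrom (a : ℕ) (v : B.V a) : (i : ℕ) → B.E (a + i)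
  | 0 => (B.hasOut a v).choose
  | i + 1 => (B.hasOut (a + i + 1) (B.tgt (chainFrom a v i))).choose

theorem chainFrom_src_zero (a : ℕ) (v : B.V a) : B.src (B.chainFrom a v 0) = v :=
  (B.hasOut a v).choose_spec

theorem chainFrom_src_succ (a : ℕ) (v : B.V a) (i : ℕ) :
    B.src (B.chainFrom a v (i + 1)) = B.tgt (B.chainFrom a v i) :=
  (B.hasOut (a + i + 1) (B.tgt (B.chainFrom a v i))).choose_spec

noncomputable def chainTo (a : ℕ) : (j : ℕ) → (w : B.V (a + j + 1)) → (i : ℕ) → i ≤ j → B.E (a + i)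
  | 0, w, i, _ => B.castE (by omega : a + 0 = a + i) (B.hasIn a w).choose
  | j + 1, w, i, _ =>
      if h : i ≤ j then chainTo a j (B.src (B.hasIn (a + j + 1) w).choose) i h
      else B.castE (by omega : a + (j + 1) = a + i) (B.hasIn (a + j + 1) w).choose

theorem chainTo_tgt_last (a : ℕ) : ∀ (j : ℕ) (w : B.V (a + j + 1)),
    B.tgt (B.chainTo a j w j le_rfl) = w := by
  intro j w
  cases j with
  | zero =>
      simp only [chainTo]
      exact (B.hasIn a w).choose_spec
  | succ j =>
      simp only [chainTo]
      rw [dif_neg (by omega : ¬ j + 1 ≤ j)]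
      exact (B.hasIn (a + j + 1) w).choose_spec

theorem chainTo_chain (a : ℕ) : ∀ (j : ℕ) (w : B.V (a + j + 1)) (i : ℕ) (h : i + 1 ≤ j)
    (h' : i ≤ j), B.tgt (B.chainTo a j w i h') = B.src (B.chainTo a j w (i + 1) h) := by
  intro j
  induction j with
  | zero => intro w i h h'; omega
  | succ j ih =>
      intro w i h h'
      by_cases hij : i + 1 ≤ j
      · simp only [chainTo]
        rw [dif_pos (by omega : i ≤ j), dif_pos hij]
        exact ih _ i hij (by omega)
      · have hi : i = j := by omega
        subst hi
        simp only [chainTo]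
        rw [dif_pos (le_refl i), dif_neg (by omega : ¬ i + 1 ≤ i)]
        exact B.chainTo_tgt_last a i _


def TelE (a b : ℕ) : Type :=
  { f : (i : Fin (b - a)) → B.E (a + i.val) //
    ∀ (i : ℕ) (h : i + 1 < b - a), B.tgt (f ⟨i, by omega⟩) = B.src (f ⟨i + 1, h⟩) }

def telSrc {a b : ℕ} (hab : a < b) (f : B.TelE a b) : B.V a :=
  B.src (f.1 ⟨0, by omega⟩)

def telTgt {a b : ℕ} (hab : a < b) (f : B.TelE a b) : B.V b :=
  B.castV (by omega : a + (b - a - 1) + 1 = b) (B.tgt (f.1 ⟨b - a - 1, by omega⟩))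

def telLT {a b : ℕ} (f g : B.TelE a b) : Prop :=
  ∃ (N : ℕ) (h : N < b - a), B.elt (f.1 ⟨N, h⟩) (g.1 ⟨N, h⟩) ∧
    ∀ (i : ℕ) (hi : i < b - a), N < i → f.1 ⟨i, hi⟩ = g.1 ⟨i, hi⟩

noncomputable def Telescope (ns : ℕ → ℕ) (hmono : StrictMono ns) (h0 : ns 0 = 0) : BDiagram where
  V l := B.V (ns l)
  E l := B.TelE (ns l) (ns (l + 1))
  fintV l := B.fintV (ns l)
  fintE l := by
    classical
    letI : ∀ i : Fin (ns (l + 1) - ns l), Fintype (B.E (ns l + i.val)) := fun i => B.fintE _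
    exact Subtype.fintype _
  nonV l := B.nonV (ns l)
  rootSubsingleton := by show Subsingleton (B.V (ns 0)); rw [h0]; exact B.rootSubsingleton
  src {l} f := B.telSrc (hmono (Nat.lt_succ_self l)) f
  tgt {l} f := B.telTgt (hmono (Nat.lt_succ_self l)) f
  hasOut := by
    intro l v
    refine ⟨⟨fun i => B.chainFrom (ns l) v i.val,
      fun i h => (B.chainFrom_src_succ (ns l) v i).symm⟩, ?_⟩
    exact B.chainFrom_src_zero (ns l) v
  hasIn := by
    intro l w
    have hab : ns l < ns (l + 1) := hmono (Nat.lt_succ_self l)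
    have hj : ns l + (ns (l + 1) - ns l - 1) + 1 = ns (l + 1) := by omega
    refine ⟨⟨fun i => B.chainTo (ns l) (ns (l + 1) - ns l - 1) (B.castV hj.symm w) i.val
        (by omega), fun i h => B.chainTo_chain _ _ _ i (by omega) (by omega)⟩, ?_⟩
    show B.castV (by omega) (B.tgt (B.chainTo (ns l) (ns (l + 1) - ns l - 1)
      (B.castV hj.symm w) (ns (l + 1) - ns l - 1) (by omega))) = w
    rw [B.chainTo_tgt_last]
    exact B.castV_eq_of_heq _ (B.castV_heq _ w)
  elt {l} f g := B.telLT f g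
  elt_tgt := by
    rintro l f g ⟨N, hN, hlt, hgt⟩
    show B.telTgt _ f = B.telTgt _ g
    unfold telTgt
    refine congrArg (B.castV _) ?_
    rcases eq_or_lt_of_le (show N ≤ ns (l + 1) - ns l - 1 by omega) with h | h
    · subst h
      exact B.elt_tgt _ _ _ hlt
    · exact congrArg B.tgt (hgt _ (by omega) h)
  elt_irrefl := by
    rintro l f ⟨N, h, hlt, -⟩
    exact B.elt_irrefl _ _ hlt
  elt_trans := by
    rintro l f g h ⟨N₁, hN₁, hlt₁, hgt₁⟩ ⟨N₂, hN₂, hlt₂, hgt₂⟩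
    rcases lt_trichotomy N₁ N₂ with hc | hc | hc
    · exact ⟨N₂, hN₂, by rw [hgt₁ N₂ hN₂ hc]; exact hlt₂,
        fun i hi hN => (hgt₁ i hi (by omega)).trans (hgt₂ i hi hN)⟩
    · subst hc
      exact ⟨N₁, hN₁, B.elt_trans _ _ _ _ hlt₁ hlt₂,
        fun i hi hN => (hgt₁ i hi hN).trans (hgt₂ i hi hN)⟩
    · refine ⟨N₁, hN₁, ?_, fun i hi hN => (hgt₁ i hi hN).trans (hgt₂ i hi (by omega))⟩
      rw [← hgt₂ N₁ hN₁ hc]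
      exact hlt₁
  elt_total := by
    intro l f g htgt hne
    classical
    have hab : ns l < ns (l + 1) := hmono (Nat.lt_succ_self l)
    set b := ns (l + 1) - ns l with hb
    have hex : ∃ N, ∃ h : N < b, f.1 ⟨N, h⟩ ≠ g.1 ⟨N, h⟩ := by
      by_contra hco
      push_neg at hco
      exact hne (Subtype.ext (funext fun i => hco i.val i.isLt))
    set P : ℕ → Prop := fun N => ∃ h : N < b, f.1 ⟨N, h⟩ ≠ g.1 ⟨N, h⟩ with hP
    obtain ⟨N₀, hN₀⟩ := hex
    set N := Nat.findGreatest P b with hNdef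
    have hPN : P N := Nat.findGreatest_spec (le_of_lt hN₀.choose) hN₀
    have hafter : ∀ i (hi : i < b), N < i → f.1 ⟨i, hi⟩ = g.1 ⟨i, hi⟩ := by
      intro i hi hNi
      by_contra hcon
      exact Nat.findGreatest_is_greatest hNi (le_of_lt hi) ⟨hi, hcon⟩
    clear_value N
    obtain ⟨hNb, hNne⟩ := hPN
    have htgtN : B.tgt (f.1 ⟨N, hNb⟩) = B.tgt (g.1 ⟨N, hNb⟩) := by
      rcases eq_or_lt_of_le (show N ≤ b - 1 by omega) with h | h
      · -- N is the last index; use equality of targets of the composite edges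
        subst h
        exact B.castV_inj _ htgt
      · have h2 : f.1 ⟨N + 1, by omega⟩ = g.1 ⟨N + 1, by omega⟩ :=
          hafter (N + 1) (by omega) (by omega)
        rw [f.2 N (by omega), g.2 N (by omega), h2]
    rcases B.elt_total _ _ _ htgtN hNne with h | h
    · exact Or.inl ⟨N, hNb, h, hafter⟩
    · exact Or.inr ⟨N, hNb, h, fun i hi hN => (hafter i hi hN).symm⟩

def teleMap (ns : ℕ → ℕ) (hmono : StrictMono ns) (h0 : ns 0 = 0) (x : B.PathSpace) :
    (B.Telescope ns hmono h0).PathSpace :=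
  ⟨fun l => ⟨fun i => x.1 (ns l + i.val), fun i _ => x.2 (ns l + i)⟩, fun l => by
    have hab : ns l < ns (l + 1) := hmono (Nat.lt_succ_self l)
    have hm : ns l + (ns (l + 1) - ns l - 1) + 1 = ns (l + 1) := by omega
    show B.castV _ (B.tgt (x.1 (ns l + (ns (l + 1) - ns l - 1)))) = B.src (x.1 (ns (l + 1) + 0))
    rw [x.2 (ns l + (ns (l + 1) - ns l - 1))]
    exact B.castV_eq_of_heq _ (by rw [hm]; exact HEq.rfl)⟩


/-- Level `n+1` is uniformly ordered: there is a single nonempty block `P` of paths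
from the root to level `n` such that the `n`-basic block at every vertex at level
`n+1` is a positive power of `P`. -/
def UniformlyOrderedLevel (n : ℕ) : Prop :=
  ∃ (p : ℕ) (hp : 0 < p) (P : Fin p → B.FinPath n),
    ∀ v : B.V (n + 1), ∃ (m : ℕ), 0 < m ∧
      ∃ enum : Fin (m * p) ≃ { q : B.FinPath (n + 1) // B.EndsAt q v },
        (∀ i j : Fin (m * p), i < j ↔ B.finLT (enum i).1 (enum j).1) ∧
        (∀ i : Fin (m * p),
          B.truncTo n (Nat.le_succ n) (enum i).1 = P ⟨i.val % p, Nat.mod_lt _ hp⟩)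

/-- The ordinal label of an edge: its position in the linear order on the edges
into its target. -/
noncomputable def edgeLabel {n : ℕ} (e : B.E n) : ℕ := Nat.card { e' : B.E n // B.elt e' e }

/-- Deterministic: for every `n ≥ 1`, distinct edges with the same source at level
`n` have different ordinal labels. -/
def Deterministic : Prop :=
  ∀ n : ℕ, 1 ≤ n → ∀ e f : B.E n, B.src e = B.src f → e ≠ f →
    B.edgeLabel e ≠ B.edgeLabel f

end BDiagram

/-- A Bratteli–Vershik system: a simple, properly ordered ordered Bratteli diagram
together with its Vershik map. -/
structure BVSystem where
  B : BDiagram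
  T : B.PathSpace ≃ B.PathSpace
  proper : B.ProperlyOrdered
  simple : B.Simple
  vershik : B.IsVershik T

/-- Conjugacy of systems: an equivariant homeomorphism of the path spaces taking
minimal paths to minimal paths. -/
def Conjugate (S S' : BVSystem) : Prop :=
  ∃ φ : S.B.PathSpace ≃ S'.B.PathSpace,
    (@Continuous _ _ S.B.pathTop S'.B.pathTop φ) ∧
    (@Continuous _ _ S'.B.pathTop S.B.pathTop φ.symm) ∧
    (∀ x, φ (S.T x) = S'.T (φ x)) ∧
    (∀ x, S.B.IsMinPath x → S'.B.IsMinPath (φ x))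

/-- An odometer: a system whose diagram has exactly one vertex at every level. -/
def IsOdometer (S : BVSystem) : Prop := ∀ n, Subsingleton (S.B.V n)

set_option maxHeartbeats 1000000

namespace BDiagram

variable (B : BDiagram)

theorem castE_heq {m n : ℕ} (h : m = n) (e : B.E m) : HEq (B.castE h e) e := by
  subst h; rfl

theorem src_castE {m n : ℕ} (h : m = n) (e : B.E m) :
    B.src (B.castE h e) = B.castV h (B.src e) := by subst h; rfl

theorem tgt_castE {m n : ℕ} (h : m = n) (e : B.E m) :
    B.tgt (B.castE h e) = B.castV (by rw [h]) (B.tgt e) := by subst h; rfl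

theorem isMinEdge_castE {m n : ℕ} (h : m = n) (e : B.E m) :
    B.IsMinEdge (B.castE h e) ↔ B.IsMinEdge e := by subst h; rfl

theorem isMaxEdge_castE {m n : ℕ} (h : m = n) (e : B.E m) :
    B.IsMaxEdge (B.castE h e) ↔ B.IsMaxEdge e := by subst h; rfl

theorem castE_path (x : B.PathSpace) {m n : ℕ} (h : m = n) :
    B.castE h (x.1 m) = x.1 n := by subst h; rfl

theorem pathLT_cofinal {x y : B.PathSpace} (h : B.pathLT x y) :
    ∃ M, ∀ n, M < n → x.1 n = y.1 n := by
  obtain ⟨N, -, hN⟩ := h; exact ⟨N, hN⟩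

theorem path_ext {x y : B.PathSpace} (h : ∀ n, x.1 n = y.1 n) : x = y :=
  Subtype.ext (funext h)

theorem comparable_of_cofinal {x y : B.PathSpace}
    (h : ∃ M, ∀ n, M < n → x.1 n = y.1 n) (hne : x ≠ y) :
    B.pathLT x y ∨ B.pathLT y x := by
  classical
  obtain ⟨M, hM⟩ := h
  have hex : ∃ N, x.1 N ≠ y.1 N := by
    by_contra hc; push_neg at hc; exact hne (B.path_ext hc)
  obtain ⟨N1, hN1⟩ := hex
  have hN1M : N1 ≤ M := by
    by_contra hc; exact hN1 (hM N1 (by omega))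
  set P : ℕ → Prop := fun N => x.1 N ≠ y.1 N with hP
  set N := Nat.findGreatest P M with hNdef
  have hPN : P N := Nat.findGreatest_spec hN1M hN1
  have hafter : ∀ n, N < n → x.1 n = y.1 n := by
    intro n hn
    by_cases hnM : n ≤ M
    · by_contra hc
      exact Nat.findGreatest_is_greatest hn hnM hc
    · exact hM n (by omega)
  have htgt : B.tgt (x.1 N) = B.tgt (y.1 N) := by
    rw [x.2 N, y.2 N, hafter (N + 1) (by omega)]
  rcases B.elt_total N _ _ htgt hPN with h | h
  · exact Or.inl ⟨N, h, hafter⟩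
  · exact Or.inr ⟨N, h, fun n hn => (hafter n hn).symm⟩

theorem vershik_unique (hp : B.ProperlyOrdered) {T1 T2 : B.PathSpace ≃ B.PathSpace}
    (h1 : B.IsVershik T1) (h2 : B.IsVershik T2) : T1 = T2 := by
  apply Equiv.ext
  intro x
  by_cases hx : B.IsMaxPath x
  · have m1 := h1.2 x hx
    have m2 := h2.2 x hx
    obtain ⟨z, -, hz⟩ := hp.1
    rw [hz _ m1, hz _ m2]
  · have H1 := h1.1 x hx
    have H2 := h2.1 x hx
    by_contra hne
    obtain ⟨M1, hM1⟩ := B.pathLT_cofinal H1.1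
    obtain ⟨M2, hM2⟩ := B.pathLT_cofinal H2.1
    have hcof : ∃ M, ∀ n, M < n → (T1 x).1 n = (T2 x).1 n := by
      refine ⟨max M1 M2, fun n hn => ?_⟩
      rw [← hM1 n (by omega), ← hM2 n (by omega)]
    rcases B.comparable_of_cofinal hcof hne with h | h
    · exact H2.2 (T1 x) H1.1 h
    · exact H1.2 (T2 x) H2.1 h

/-! ### block index for telescoping -/

theorem sm_le_apply {ns : ℕ → ℕ} (hmono : StrictMono ns) (h0 : ns 0 = 0) (n : ℕ) :
    n ≤ ns n := by
  induction n with
  | zero => omega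
  | succ n ih => have h : ns n < ns (n + 1) := hmono (by omega); omega

/-- the block containing level `n`. -/
noncomputable def blk (ns : ℕ → ℕ) (n : ℕ) : ℕ :=
  Nat.findGreatest (fun l => ns l ≤ n) n

theorem blk_le {ns : ℕ → ℕ} (hmono : StrictMono ns) (h0 : ns 0 = 0) (n : ℕ) :
    ns (blk ns n) ≤ n := by
  classical
  exact Nat.findGreatest_spec (P := fun l => ns l ≤ n) (Nat.zero_le n) (by omega)

theorem lt_blk {ns : ℕ → ℕ} (hmono : StrictMono ns) (h0 : ns 0 = 0) (n : ℕ) :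
    n < ns (blk ns n + 1) := by
  classical
  by_contra hc
  push_neg at hc
  have hle : blk ns n + 1 ≤ n := le_trans (sm_le_apply hmono h0 _) hc
  exact Nat.findGreatest_is_greatest (P := fun l => ns l ≤ n)
    (Nat.lt_succ_self (blk ns n)) hle hc

theorem blk_eq {ns : ℕ → ℕ} (hmono : StrictMono ns) (h0 : ns 0 = 0) {l n : ℕ}
    (h1 : ns l ≤ n) (h2 : n < ns (l + 1)) : blk ns n = l := by
  have hb1 := blk_le hmono h0 n
  have hb2 := lt_blk hmono h0 n
  rcases lt_trichotomy (blk ns n) l with h | h | h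
  · have := hmono.monotone (show blk ns n + 1 ≤ l by omega); omega
  · exact h
  · have := hmono.monotone (show l + 1 ≤ blk ns n by omega); omega

end BDiagram
namespace BDiagram

variable (B : BDiagram) (ns : ℕ → ℕ) (hmono : StrictMono ns) (h0 : ns 0 = 0)

theorem castV_self {m : ℕ} (h : m = m) (v : B.V m) : B.castV h v = v := rfl

theorem castE_self {m : ℕ} (h : m = m) (e : B.E m) : B.castE h e = e := rfl

theorem path_coord_congr {z w : B.PathSpace} {m n : ℕ} (h : m = n)
    (hz : z.1 m = w.1 m) : z.1 n = w.1 n := by subst h; exact hz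

theorem castE_chain {m m' n : ℕ} (h : m = n) (h' : m' = n + 1) (e : B.E m) (e' : B.E m')
    (hc : HEq (B.tgt e) (B.src e')) : B.tgt (B.castE h e) = B.src (B.castE h' e') := by
  subst h; subst h'; exact eq_of_heq hc

theorem src_heq {m m' : ℕ} (h : m = m') {e : B.E m} {e' : B.E m'} (he : HEq e e') :
    HEq (B.src e) (B.src e') := by subst h; rw [eq_of_heq he]

theorem tgt_heq {m m' : ℕ} (h : m = m') {e : B.E m} {e' : B.E m'} (he : HEq e e') :
    HEq (B.tgt e) (B.tgt e') := by subst h; rw [eq_of_heq he]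

theorem fin_app_heq {a sz : ℕ} (g : (i : Fin sz) → B.E (a + i.val)) {i j : ℕ}
    (hij : i = j) (hi : i < sz) (hj : j < sz) : HEq (g ⟨i, hi⟩) (g ⟨j, hj⟩) := by
  subst hij; rfl

/-- coordinate of a telescoped path inside block `l`. -/
def blkE (x : (B.Telescope ns hmono h0).PathSpace) (l n : ℕ)
    (h1 : ns l ≤ n) (h2 : n < ns (l + 1)) : B.E n :=
  B.castE (show ns l + (n - ns l) = n by omega)
    ((x.1 l).1 ⟨n - ns l, show n - ns l < ns (l + 1) - ns l by omega⟩)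

theorem blkE_congr (x : (B.Telescope ns hmono h0).PathSpace) {l l' n : ℕ} (hll' : l = l')
    (h1 : ns l ≤ n) (h2 : n < ns (l + 1)) (h1' : ns l' ≤ n) (h2' : n < ns (l' + 1)) :
    B.blkE ns hmono h0 x l n h1 h2 = B.blkE ns hmono h0 x l' n h1' h2' := by
  subst hll'; rfl

noncomputable def teleInvFun (x : (B.Telescope ns hmono h0).PathSpace) (n : ℕ) : B.E n :=
  B.blkE ns hmono h0 x (blk ns n) n (blk_le hmono h0 n) (lt_blk hmono h0 n)

theorem teleInvFun_chain (x : (B.Telescope ns hmono h0).PathSpace) (n : ℕ) :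
    B.tgt (B.teleInvFun ns hmono h0 x n) = B.src (B.teleInvFun ns hmono h0 x (n + 1)) := by
  obtain ⟨l, hl⟩ : ∃ l, blk ns n = l := ⟨_, rfl⟩
  have h1 : ns l ≤ n := hl ▸ blk_le hmono h0 n
  have h2 : n < ns (l + 1) := hl ▸ lt_blk hmono h0 n
  have e1 : B.teleInvFun ns hmono h0 x n = B.blkE ns hmono h0 x l n h1 h2 :=
    blkE_congr B ns hmono h0 x hl _ _ _ _
  rw [e1]
  by_cases hcase : n + 1 < ns (l + 1)
  · -- same block
    have hbl : blk ns (n + 1) = l := blk_eq hmono h0 (by omega) hcase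
    have e2 : B.teleInvFun ns hmono h0 x (n+1)
        = B.blkE ns hmono h0 x l (n+1) (by omega) hcase :=
      blkE_congr B ns hmono h0 x hbl _ _ _ _
    rw [e2]
    apply B.castE_chain
    have hchain := (x.1 l).2 (n - ns l) (show (n - ns l) + 1 < ns (l+1) - ns l by omega)
    refine HEq.trans (heq_of_eq hchain) (B.src_heq (by simp only [Fin.val_mk]; omega) ?_)
    exact B.fin_app_heq _ (by omega) _ _
  · -- next block
    have hs : ns (l + 1) < ns (l + 1 + 1) := hmono (by omega)
    have hn1 : n + 1 = ns (l + 1) := by omega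
    have hbl : blk ns (n + 1) = l + 1 := blk_eq hmono h0 (by omega) (by omega)
    have e2 : B.teleInvFun ns hmono h0 x (n+1)
        = B.blkE ns hmono h0 x (l+1) (n+1) (by omega) (by omega) :=
      blkE_congr B ns hmono h0 x hbl _ _ _ _
    rw [e2]
    apply B.castE_chain
    have hsl : ns l < ns (l + 1) := hmono (by omega)
    have hx2' : B.castV (show ns l + (ns (l+1) - ns l - 1) + 1 = ns (l+1) by omega)
        (B.tgt ((x.1 l).1 ⟨ns (l+1) - ns l - 1, show _ < ns (l+1) - ns l by omega⟩))
        = B.src ((x.1 (l+1)).1 ⟨0, show 0 < ns (l+1+1) - ns (l+1) by omega⟩) := x.2 l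
    have hheq : HEq
        (B.tgt ((x.1 l).1 ⟨ns (l+1) - ns l - 1, show _ < ns (l+1) - ns l by omega⟩))
        (B.src ((x.1 (l+1)).1 ⟨0, show 0 < ns (l+1+1) - ns (l+1) by omega⟩)) := by
      rw [← hx2']
      exact (B.castV_heq _ _).symm
    refine HEq.trans (HEq.trans (B.tgt_heq (by simp only [Fin.val_mk]; omega) ?_) hheq) (B.src_heq (by simp only [Fin.val_mk]; omega) ?_)
    · exact B.fin_app_heq _ (by omega) _ _
    · exact B.fin_app_heq _ (by omega) _ _

noncomputable def teleInv (x : (B.Telescope ns hmono h0).PathSpace) : B.PathSpace :=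
  ⟨B.teleInvFun ns hmono h0 x, B.teleInvFun_chain ns hmono h0 x⟩

end BDiagram
namespace BDiagram

variable (B : BDiagram) (ns : ℕ → ℕ) (hmono : StrictMono ns) (h0 : ns 0 = 0)

/-- helper: castE h e = e' from HEq -/
theorem castE_eq_of_heq' {m n : ℕ} {h : m = n} {e : B.E m} {e' : B.E n}
    (he : HEq e e') : B.castE h e = e' := by subst h; exact eq_of_heq he

theorem teleMap_coord (x : B.PathSpace) (l : ℕ) (i : Fin (ns (l+1) - ns l)) :
    ((B.teleMap ns hmono h0 x).1 l).1 i = x.1 (ns l + i.val) := rfl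

theorem teleInv_coord (x : (B.Telescope ns hmono h0).PathSpace) {l n : ℕ}
    (h1 : ns l ≤ n) (h2 : n < ns (l + 1)) :
    (B.teleInv ns hmono h0 x).1 n = B.blkE ns hmono h0 x l n h1 h2 :=
  blkE_congr B ns hmono h0 x (blk_eq hmono h0 h1 h2)
    (blk_le hmono h0 n) (lt_blk hmono h0 n) h1 h2

theorem teleInv_teleMap (x : B.PathSpace) :
    B.teleInv ns hmono h0 (B.teleMap ns hmono h0 x) = x := by
  apply B.path_ext
  intro n
  have h1 : ns (blk ns n) ≤ n := blk_le hmono h0 n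
  show B.castE _ _ = x.1 n
  exact B.castE_path x (show ns (blk ns n) + (n - ns (blk ns n)) = n by omega)

theorem teleMap_teleInv (x : (B.Telescope ns hmono h0).PathSpace) :
    B.teleMap ns hmono h0 (B.teleInv ns hmono h0 x) = x := by
  apply path_ext
  intro l
  apply Subtype.ext
  funext i
  show (B.teleInv ns hmono h0 x).1 (ns l + i.val) = (x.1 l).1 i
  have hsl : ns l < ns (l + 1) := hmono (by omega)
  have h1 : ns l ≤ ns l + i.val := by omega
  have h2 : ns l + i.val < ns (l + 1) := by have := i.isLt; omega
  rw [B.teleInv_coord ns hmono h0 x h1 h2]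
  show B.castE _ ((x.1 l).1 ⟨ns l + i.val - ns l, _⟩) = (x.1 l).1 i
  have hv : ns l + i.val - ns l = i.val := by omega
  have hheq : HEq ((x.1 l).1 ⟨ns l + i.val - ns l, show _ < ns (l+1) - ns l by omega⟩)
      ((x.1 l).1 i) := by
    refine HEq.trans (B.fin_app_heq _ hv _ i.isLt) ?_
    rfl
  exact B.castE_eq_of_heq' hheq

end BDiagram
namespace BDiagram

variable (B : BDiagram)

noncomputable def teleEquiv (ns : ℕ → ℕ) (hmono : StrictMono ns) (h0 : ns 0 = 0) :
    B.PathSpace ≃ (B.Telescope ns hmono h0).PathSpace where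
  toFun := B.teleMap ns hmono h0
  invFun := B.teleInv ns hmono h0
  left_inv := B.teleInv_teleMap ns hmono h0
  right_inv := B.teleMap_teleInv ns hmono h0

noncomputable def modSegFun {a b : ℕ} (f : B.TelE a b) (N : ℕ) (hN : N < b - a)
    (e' : B.E (a + N)) (j : ℕ) (hj : j < b - a) : B.E (a + j) :=
  if h : j < N then
    B.chainTo a (N - 1) (B.castV (show a + N = a + (N - 1) + 1 by omega) (B.src e'))
      j (by omega)
  else if h2 : j = N then B.castE (show a + N = a + j by omega) e'
  else f.1 ⟨j, hj⟩

theorem modSegFun_lt {a b : ℕ} (f : B.TelE a b) (N : ℕ) (hN : N < b - a)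
    (e' : B.E (a + N)) (j : ℕ) (hj : j < b - a) (h : j < N) (hle : j ≤ N - 1) :
    B.modSegFun f N hN e' j hj =
      B.chainTo a (N - 1) (B.castV (show a + N = a + (N - 1) + 1 by omega) (B.src e'))
        j hle := dif_pos h

theorem modSegFun_at {a b : ℕ} (f : B.TelE a b) (N : ℕ) (hN : N < b - a)
    (e' : B.E (a + N)) (j : ℕ) (hj : j < b - a) (h : j = N) :
    B.modSegFun f N hN e' j hj = B.castE (show a + N = a + j by omega) e' := by
  unfold modSegFun
  rw [dif_neg (by omega), dif_pos h]

theorem modSegFun_gt {a b : ℕ} (f : B.TelE a b) (N : ℕ) (hN : N < b - a)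
    (e' : B.E (a + N)) (j : ℕ) (hj : j < b - a) (h : N < j) :
    B.modSegFun f N hN e' j hj = f.1 ⟨j, hj⟩ := by
  unfold modSegFun
  rw [dif_neg (by omega), dif_neg (by omega)]

theorem modSegFun_chain {a b : ℕ} (f : B.TelE a b) (N : ℕ) (hN : N < b - a)
    (e' : B.E (a + N)) (htgt : B.tgt e' = B.tgt (f.1 ⟨N, hN⟩)) (i : ℕ) (h : i + 1 < b - a) :
    B.tgt (B.modSegFun f N hN e' i (by omega)) = B.src (B.modSegFun f N hN e' (i + 1) h) := by
  by_cases hc1 : i + 1 < N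
  · rw [B.modSegFun_lt f N hN e' i _ (by omega) (by omega),
      B.modSegFun_lt f N hN e' (i+1) _ hc1 (by omega)]
    exact B.chainTo_chain a (N - 1) _ i (by omega) (by omega)
  · by_cases hc2 : i + 1 = N
    · rw [B.modSegFun_lt f N hN e' i _ (by omega) (by omega),
        B.modSegFun_at f N hN e' (i+1) _ hc2]
      have hi : i = N - 1 := by omega
      subst hi
      rw [B.src_castE]
      exact (B.chainTo_tgt_last a (N - 1) _).trans (by rfl)
    · by_cases hc3 : i = N
      · rw [B.modSegFun_at f N hN e' i _ hc3,
          B.modSegFun_gt f N hN e' (i+1) _ (by omega)]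
        subst hc3
        rw [B.tgt_castE, htgt]
        have hf := f.2 i h
        rw [hf]
        rfl
      · rw [B.modSegFun_gt f N hN e' i _ (by omega),
          B.modSegFun_gt f N hN e' (i+1) _ (by omega)]
        exact f.2 i h

noncomputable def modSeg {a b : ℕ} (f : B.TelE a b) (N : ℕ) (hN : N < b - a)
    (e' : B.E (a + N)) (htgt : B.tgt e' = B.tgt (f.1 ⟨N, hN⟩)) : B.TelE a b :=
  ⟨fun j => B.modSegFun f N hN e' j.val j.isLt,
   fun i h => B.modSegFun_chain f N hN e' htgt i h⟩

theorem telLT_modSeg_left {a b : ℕ} (f : B.TelE a b) (N : ℕ) (hN : N < b - a)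
    (e' : B.E (a + N)) (htgt : B.tgt e' = B.tgt (f.1 ⟨N, hN⟩))
    (helt : B.elt e' (f.1 ⟨N, hN⟩)) : B.telLT (B.modSeg f N hN e' htgt) f := by
  refine ⟨N, hN, ?_, fun i hi hNi => B.modSegFun_gt f N hN e' i hi hNi⟩
  show B.elt (B.modSegFun f N hN e' N hN) _
  rw [B.modSegFun_at f N hN e' N hN rfl]
  exact helt

theorem telLT_modSeg_right {a b : ℕ} (f : B.TelE a b) (N : ℕ) (hN : N < b - a)
    (e' : B.E (a + N)) (htgt : B.tgt e' = B.tgt (f.1 ⟨N, hN⟩))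
    (helt : B.elt (f.1 ⟨N, hN⟩) e') : B.telLT f (B.modSeg f N hN e' htgt) := by
  refine ⟨N, hN, ?_, fun i hi hNi => (B.modSegFun_gt f N hN e' i hi hNi).symm⟩
  show B.elt _ (B.modSegFun f N hN e' N hN)
  rw [B.modSegFun_at f N hN e' N hN rfl]
  exact helt

variable (ns : ℕ → ℕ) (hmono : StrictMono ns) (h0 : ns 0 = 0)

theorem telE_isMinEdge_iff {l : ℕ} (f : (B.Telescope ns hmono h0).E l) :
    (B.Telescope ns hmono h0).IsMinEdge f ↔ ∀ i, B.IsMinEdge (f.1 i) := by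
  constructor
  · intro h
    by_contra hc
    push_neg at hc
    obtain ⟨i, hi⟩ := hc
    simp only [IsMinEdge, not_forall, not_not] at hi
    obtain ⟨e', helt⟩ := hi
    have htgt : B.tgt e' = B.tgt (f.1 ⟨i.val, i.isLt⟩) := B.elt_tgt _ _ _ helt
    exact h (B.modSeg f i.val i.isLt e' htgt)
      (B.telLT_modSeg_left f i.val i.isLt e' htgt helt)
  · intro h f' hlt
    obtain ⟨N, hN, helt, -⟩ := hlt
    exact h ⟨N, hN⟩ _ helt

theorem telE_isMaxEdge_iff {l : ℕ} (f : (B.Telescope ns hmono h0).E l) :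
    (B.Telescope ns hmono h0).IsMaxEdge f ↔ ∀ i, B.IsMaxEdge (f.1 i) := by
  constructor
  · intro h
    by_contra hc
    push_neg at hc
    obtain ⟨i, hi⟩ := hc
    simp only [IsMaxEdge, not_forall, not_not] at hi
    obtain ⟨e', helt⟩ := hi
    have htgt : B.tgt e' = B.tgt (f.1 ⟨i.val, i.isLt⟩) := (B.elt_tgt _ _ _ helt).symm
    exact h (B.modSeg f i.val i.isLt e' htgt)
      (B.telLT_modSeg_right f i.val i.isLt e' htgt helt)
  · intro h f' hlt
    obtain ⟨N, hN, helt, -⟩ := hlt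
    exact h ⟨N, hN⟩ _ helt

end BDiagram
namespace BDiagram

variable (B : BDiagram) (ns : ℕ → ℕ) (hmono : StrictMono ns) (h0 : ns 0 = 0)

theorem isMinEdge_congr {z : B.PathSpace} {m n : ℕ} (h : m = n)
    (hz : B.IsMinEdge (z.1 m)) : B.IsMinEdge (z.1 n) := by subst h; exact hz

theorem isMinPath_teleMap (x : B.PathSpace) :
    (B.Telescope ns hmono h0).IsMinPath (B.teleMap ns hmono h0 x) ↔ B.IsMinPath x := by
  constructor
  · intro h n
    have h1 : ns (blk ns n) ≤ n := blk_le hmono h0 n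
    have h2 : n < ns (blk ns n + 1) := lt_blk hmono h0 n
    have := (B.telE_isMinEdge_iff ns hmono h0 _).1 (h (blk ns n))
      ⟨n - ns (blk ns n), by omega⟩
    rw [B.teleMap_coord ns hmono h0] at this
    exact B.isMinEdge_congr (z := x) (by omega : ns (blk ns n) + (n - ns (blk ns n)) = n) this
  · intro h l
    rw [B.telE_isMinEdge_iff ns hmono h0]
    intro i
    rw [B.teleMap_coord ns hmono h0]
    exact h _

theorem isMaxEdge_congr {z : B.PathSpace} {m n : ℕ} (h : m = n)
    (hz : B.IsMaxEdge (z.1 m)) : B.IsMaxEdge (z.1 n) := by subst h; exact hz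

theorem isMaxPath_teleMap (x : B.PathSpace) :
    (B.Telescope ns hmono h0).IsMaxPath (B.teleMap ns hmono h0 x) ↔ B.IsMaxPath x := by
  constructor
  · intro h n
    have h1 : ns (blk ns n) ≤ n := blk_le hmono h0 n
    have h2 : n < ns (blk ns n + 1) := lt_blk hmono h0 n
    have := (B.telE_isMaxEdge_iff ns hmono h0 _).1 (h (blk ns n))
      ⟨n - ns (blk ns n), by omega⟩
    rw [B.teleMap_coord ns hmono h0] at this
    exact B.isMaxEdge_congr (z := x) (by omega : ns (blk ns n) + (n - ns (blk ns n)) = n) this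
  · intro h l
    rw [B.telE_isMaxEdge_iff ns hmono h0]
    intro i
    rw [B.teleMap_coord ns hmono h0]
    exact h _

theorem teleMap_block_ext {z w : B.PathSpace} (l : ℕ)
    (h : ∀ n, ns l ≤ n → n < ns (l + 1) → z.1 n = w.1 n) :
    (B.teleMap ns hmono h0 z).1 l = (B.teleMap ns hmono h0 w).1 l := by
  apply Subtype.ext
  funext i
  show z.1 (ns l + i.val) = w.1 (ns l + i.val)
  exact h _ (by omega) (by have := i.isLt; omega)

theorem teleMap_block_inj {z w : B.PathSpace} (l : ℕ)
    (h : (B.teleMap ns hmono h0 z).1 l = (B.teleMap ns hmono h0 w).1 l)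
    (n : ℕ) (h1 : ns l ≤ n) (h2 : n < ns (l + 1)) : z.1 n = w.1 n := by
  have := congrArg (fun t => t.1 ⟨n - ns l, show n - ns l < ns (l+1) - ns l by omega⟩) h
  simp only [teleMap_coord] at this
  exact B.path_coord_congr (show ns l + (n - ns l) = n by omega) this

theorem pathLT_teleMap (x y : B.PathSpace) :
    B.pathLT x y ↔
      (B.Telescope ns hmono h0).pathLT (B.teleMap ns hmono h0 x) (B.teleMap ns hmono h0 y) := by
  constructor
  · rintro ⟨N, hlt, hab⟩
    obtain ⟨L, hL⟩ : ∃ L, blk ns N = L := ⟨_, rfl⟩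
    have h1 : ns L ≤ N := hL ▸ blk_le hmono h0 N
    have h2 : N < ns (L + 1) := hL ▸ lt_blk hmono h0 N
    refine ⟨L, ?_, ?_⟩
    · show (B.Telescope ns hmono h0).elt _ _
      show B.telLT _ _
      refine ⟨N - ns L, by omega, ?_, ?_⟩
      · show B.elt (x.1 (ns L + (N - ns L))) (y.1 (ns L + (N - ns L)))
        have hidx : ns L + (N - ns L) = N := by omega
        rw [hidx]
        exact hlt
      · intro i hi hNi
        show x.1 (ns L + i) = y.1 (ns L + i)
        exact hab _ (by omega)
    · intro l hl
      apply B.teleMap_block_ext ns hmono h0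
      intro n hn1 hn2
      have : ns (L + 1) ≤ ns l := hmono.monotone (by omega)
      exact hab n (by omega)
  · rintro ⟨L, hlt, hab⟩
    obtain ⟨N', hN', helt, hinner⟩ := hlt
    refine ⟨ns L + N', ?_, ?_⟩
    · exact helt
    · intro n hn
      by_cases hc : n < ns (L + 1)
      · have h1 : ns L ≤ n := by omega
        have h3 := hinner (n - ns L) (by omega) (by omega)
        exact B.path_coord_congr (show ns L + (n - ns L) = n by omega) h3
      · have hblk1 : ns L ≤ n := by omega
        obtain ⟨l, hl⟩ : ∃ l, blk ns n = l := ⟨_, rfl⟩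
        have hb1 : ns l ≤ n := hl ▸ blk_le hmono h0 n
        have hb2 : n < ns (l + 1) := hl ▸ lt_blk hmono h0 n
        have hLl : L < l := by
          by_contra hc2
          push_neg at hc2
          have : ns (l + 1) ≤ ns (L + 1) := hmono.monotone (by omega)
          omega
        exact B.teleMap_block_inj ns hmono h0 l (hab l hLl) n hb1 hb2

/-- the Vershik map transported to the telescope. -/
noncomputable def teleVershik (T : B.PathSpace ≃ B.PathSpace) :
    (B.Telescope ns hmono h0).PathSpace ≃ (B.Telescope ns hmono h0).PathSpace :=
  ((B.teleEquiv ns hmono h0).symm.trans T).trans (B.teleEquiv ns hmono h0)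

theorem teleVershik_apply (T : B.PathSpace ≃ B.PathSpace)
    (x : (B.Telescope ns hmono h0).PathSpace) :
    B.teleVershik ns hmono h0 T x = B.teleMap ns hmono h0 (T (B.teleInv ns hmono h0 x)) := rfl

theorem teleVershik_comm (T : B.PathSpace ≃ B.PathSpace) (x : B.PathSpace) :
    B.teleVershik ns hmono h0 T (B.teleMap ns hmono h0 x) = B.teleMap ns hmono h0 (T x) := by
  rw [teleVershik_apply, B.teleInv_teleMap ns hmono h0]

theorem teleVershik_isVershik {T : B.PathSpace ≃ B.PathSpace} (hT : B.IsVershik T) :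
    (B.Telescope ns hmono h0).IsVershik (B.teleVershik ns hmono h0 T) := by
  constructor
  · intro x' hmax
    obtain ⟨x, rfl⟩ : ∃ x, B.teleMap ns hmono h0 x = x' :=
      ⟨B.teleInv ns hmono h0 x', B.teleMap_teleInv ns hmono h0 x'⟩
    rw [B.teleVershik_comm ns hmono h0 T x]
    have hxmax : ¬ B.IsMaxPath x := fun h =>
      hmax ((B.isMaxPath_teleMap ns hmono h0 x).2 h)
    obtain ⟨hlt, hmin'⟩ := hT.1 x hxmax
    constructor
    · exact (B.pathLT_teleMap ns hmono h0 x (T x)).1 hlt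
    · intro z' hz1 hz2
      obtain ⟨z, rfl⟩ : ∃ z, B.teleMap ns hmono h0 z = z' :=
        ⟨B.teleInv ns hmono h0 z', B.teleMap_teleInv ns hmono h0 z'⟩
      exact hmin' z ((B.pathLT_teleMap ns hmono h0 x z).2 hz1)
        ((B.pathLT_teleMap ns hmono h0 z (T x)).2 hz2)
  · intro x' hmax
    obtain ⟨x, rfl⟩ : ∃ x, B.teleMap ns hmono h0 x = x' :=
      ⟨B.teleInv ns hmono h0 x', B.teleMap_teleInv ns hmono h0 x'⟩
    rw [B.teleVershik_comm ns hmono h0 T x]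
    exact (B.isMinPath_teleMap ns hmono h0 _).2
      (hT.2 x ((B.isMaxPath_teleMap ns hmono h0 x).1 hmax))

theorem tele_properlyOrdered (hp : B.ProperlyOrdered) :
    (B.Telescope ns hmono h0).ProperlyOrdered := by
  obtain ⟨⟨xmin, hxmin, hxminu⟩, ⟨xmax, hxmax, hxmaxu⟩⟩ := hp
  constructor
  · refine ⟨B.teleMap ns hmono h0 xmin, (B.isMinPath_teleMap ns hmono h0 xmin).2 hxmin, ?_⟩
    intro y' hy'
    obtain ⟨y, rfl⟩ : ∃ y, B.teleMap ns hmono h0 y = y' :=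
      ⟨B.teleInv ns hmono h0 y', B.teleMap_teleInv ns hmono h0 y'⟩
    rw [hxminu y ((B.isMinPath_teleMap ns hmono h0 y).1 hy')]
  · refine ⟨B.teleMap ns hmono h0 xmax, (B.isMaxPath_teleMap ns hmono h0 xmax).2 hxmax, ?_⟩
    intro y' hy'
    obtain ⟨y, rfl⟩ : ∃ y, B.teleMap ns hmono h0 y = y' :=
      ⟨B.teleInv ns hmono h0 y', B.teleMap_teleInv ns hmono h0 y'⟩
    rw [hxmaxu y ((B.isMaxPath_teleMap ns hmono h0 y).1 hy')]

end BDiagram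
namespace BDiagram

variable (B : BDiagram)

theorem dep_heq {T : ℕ → Type} (f : ∀ i, T i) {i i' : ℕ} (h : i = i') : HEq (f i) (f i') := by
  subst h; rfl

theorem castV_congr {m m' n : ℕ} (hm : m = m') {v : B.V m} {v' : B.V m'}
    (hv : HEq v v') (p : m = n) (p' : m' = n) : B.castV p v = B.castV p' v' := by
  subst p; subst hm; exact eq_of_heq hv

/-- full connection between level `a` and level `c+1`. -/
def FullConn (a c : ℕ) : Prop :=
  ∀ (v : B.V a) (w : B.V (c + 1)), ∃ f : ∀ i, B.E i,
    B.SegOn f a (c + 1) ∧ B.src (f a) = v ∧ B.tgt (f c) = w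

theorem simple_fullConn (hs : B.Simple) :
    ∃ ms : ℕ → ℕ, StrictMono ms ∧ ms 0 = 0 ∧
      ∀ l, B.FullConn (ms l) (ms (l + 1) - 1) := by
  obtain ⟨ms, hmono, h0, hkey⟩ := hs
  refine ⟨ms, hmono, h0, fun l => ?_⟩
  intro v w
  have h1 : ms l < ms (l + 1) := hmono (by omega)
  exact hkey l (ms (l + 1) - 1) (by omega) v w

/-- a junk edge at each level. -/
noncomputable def junkE (n : ℕ) : B.E n :=
  (B.hasOut n (Classical.choice (B.nonV n))).choose

noncomputable def extSeg (a c : ℕ) {a' c' : ℕ} (v : B.V a') (w : B.V (c' + 1))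
    (f : ∀ i, B.E i) (i : ℕ) : B.E i :=
  if h1 : a' ≤ i ∧ i + 1 ≤ a then
    B.castE (show a' + (i - a') = i by omega) (B.chainFrom a' v (i - a'))
  else if h2 : a ≤ i ∧ i ≤ c then f i
  else if h3 : c + 1 ≤ i ∧ i ≤ c' then
    B.castE (show (c + 1) + (i - (c + 1)) = i by omega)
      (B.chainTo (c + 1) (c' - (c + 1)) (B.castV (show c' + 1 = (c + 1) + (c' - (c + 1)) + 1 by omega) w)
        (i - (c + 1)) (by omega))
  else B.junkE i

theorem chainTo_heq (a j : ℕ) (w : B.V (a + j + 1)) {i i' : ℕ} (h : i = i')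
    (hi : i ≤ j) (hi' : i' ≤ j) : HEq (B.chainTo a j w i hi) (B.chainTo a j w i' hi') := by
  subst h; rfl

theorem fullConn_extend {a c a' c' : ℕ} (hac : a ≤ c) (h : B.FullConn a c)
    (ha : a' ≤ a) (hc : c ≤ c') : B.FullConn a' c' := by
  intro v w
  set u : B.V a := if hlt : a' < a then
      B.castV (show a' + (a - a' - 1) + 1 = a by omega)
        (B.tgt (B.chainFrom a' v (a - a' - 1)))
    else B.castV (show a' = a by omega) v with hu
  set w' : B.V (c + 1) := if hlt : c < c' then
      B.src (B.chainTo (c + 1) (c' - (c + 1))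
        (B.castV (show c' + 1 = (c + 1) + (c' - (c + 1)) + 1 by omega) w) 0 (by omega))
    else B.castV (show c' + 1 = c + 1 by omega) w with hw'
  obtain ⟨f, hseg, hsrc, htgt⟩ := h u w'
  have hv1 : ∀ (i : ℕ) (h1 : a' ≤ i) (h2 : i + 1 ≤ a), B.extSeg a c v w f i
      = B.castE (show a' + (i - a') = i by omega) (B.chainFrom a' v (i - a')) :=
    fun i h1 h2 => dif_pos ⟨h1, h2⟩
  have hv2 : ∀ (i : ℕ) (h1 : a ≤ i) (h2 : i ≤ c), B.extSeg a c v w f i = f i := by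
    intro i h1 h2
    unfold extSeg
    rw [dif_neg (show ¬(a' ≤ i ∧ i + 1 ≤ a) by omega), dif_pos ⟨h1, h2⟩]
  have hv3 : ∀ (i : ℕ) (h1 : c + 1 ≤ i) (h2 : i ≤ c'), B.extSeg a c v w f i
      = B.castE (show (c + 1) + (i - (c + 1)) = i by omega)
          (B.chainTo (c + 1) (c' - (c + 1))
            (B.castV (show c' + 1 = (c + 1) + (c' - (c + 1)) + 1 by omega) w)
            (i - (c + 1)) (by omega)) := by
    intro i h1 h2
    unfold extSeg
    rw [dif_neg (show ¬(a' ≤ i ∧ i + 1 ≤ a) by omega),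
      dif_neg (show ¬(a ≤ i ∧ i ≤ c) by omega), dif_pos ⟨h1, h2⟩]
  refine ⟨B.extSeg a c v w f, ?_, ?_, ?_⟩
  · -- SegOn
    intro i hi1 hi2
    by_cases k1 : i + 1 + 1 ≤ a
    · rw [hv1 i hi1 (by omega), hv1 (i + 1) (by omega) k1]
      apply B.castE_chain
      have h1 : HEq (B.src (B.chainFrom a' v ((i - a') + 1)))
          (B.src (B.chainFrom a' v (i + 1 - a'))) :=
        B.src_heq (by omega) (dep_heq (B.chainFrom a' v) (by omega))
      rw [B.chainFrom_src_succ a' v (i - a')] at h1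
      exact h1
    · by_cases k2 : i + 1 = a
      · -- junction chainFrom -> f  (i + 1 = a)
        rw [hv1 i hi1 (by omega), hv2 (i + 1) (by omega) (by omega)]
        have ha'a : a' < a := by omega
        rw [hu, dif_pos ha'a] at hsrc
        subst k2
        rw [hsrc, B.tgt_castE]
        refine B.castV_congr (by omega) ?_ _ _
        exact B.tgt_heq (by omega) (dep_heq (B.chainFrom a' v) (by omega))
      · by_cases k3 : i + 1 ≤ c
        · -- both inside f
          rw [hv2 i (by omega) (by omega), hv2 (i + 1) (by omega) k3]
          exact hseg i (by omega) (by omega)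
        · by_cases k4 : i = c
          · -- junction f -> chainTo  (i = c, c < c')
            have hcc' : c < c' := by omega
            rw [hv2 i (by omega) (by omega), hv3 (i + 1) (by omega) (by omega)]
            subst k4
            rw [htgt, hw', dif_pos hcc', B.src_castE]
            exact (B.castV_eq_of_heq _
              (B.src_heq (by omega) (B.chainTo_heq _ _ _ (by omega) _ _))).symm
          · -- both in chainTo region
            rw [hv3 i (by omega) (by omega), hv3 (i + 1) (by omega) (by omega)]
            apply B.castE_chain
            have h1 : HEq
                (B.src (B.chainTo (c + 1) (c' - (c + 1))
                  (B.castV (show c' + 1 = (c + 1) + (c' - (c + 1)) + 1 by omega) w)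
                  ((i - (c + 1)) + 1) (by omega)))
                (B.src (B.chainTo (c + 1) (c' - (c + 1))
                  (B.castV (show c' + 1 = (c + 1) + (c' - (c + 1)) + 1 by omega) w)
                  (i + 1 - (c + 1)) (by omega))) :=
              B.src_heq (by omega) (B.chainTo_heq _ _ _ (by omega) _ _)
            rw [← B.chainTo_chain (c + 1) (c' - (c + 1)) _ (i - (c + 1)) (by omega) (by omega)] at h1
            exact h1
  · -- source
    by_cases hlt : a' < a
    · rw [hv1 a' le_rfl (by omega), B.src_castE]
      have h1 : B.castV (show a' + (a' - a') = a' by omega)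
          (B.src (B.chainFrom a' v (a' - a'))) = B.src (B.chainFrom a' v 0) :=
        B.castV_congr (by omega) (B.src_heq (by omega) (dep_heq (B.chainFrom a' v) (by omega)))
          _ (show a' + 0 = a' by omega)
      rw [h1, B.chainFrom_src_zero]
    · have haa : a' = a := by omega
      rw [hv2 a' (by omega) (by omega)]
      rw [hu, dif_neg hlt] at hsrc
      subst haa
      rw [hsrc]
      rfl
  · -- target
    by_cases hlt : c < c'
    · rw [hv3 c' (by omega) le_rfl, B.tgt_castE]
      have h1 : B.castV (show (c + 1) + (c' - (c + 1)) + 1 = c' + 1 by omega)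
          (B.tgt (B.chainTo (c + 1) (c' - (c + 1))
            (B.castV (show c' + 1 = (c + 1) + (c' - (c + 1)) + 1 by omega) w)
            (c' - (c + 1)) le_rfl)) = w := by
        rw [B.chainTo_tgt_last]
        exact B.castV_eq_of_heq _ (B.castV_heq _ w)
      refine Eq.trans ?_ h1
      exact B.castV_congr (by omega)
        (B.tgt_heq (by omega) (B.chainTo_heq _ _ _ (by omega) _ _)) _ _
    · have hcc : c = c'
      · omega
      rw [hv2 c' (by omega) (by omega)]
      rw [hw', dif_neg hlt] at htgt
      subst hcc
      rw [htgt]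
      exact B.castV_eq_of_heq _ HEq.rfl

end BDiagram
namespace BDiagram

variable (B : BDiagram) (ns : ℕ → ℕ) (hmono : StrictMono ns) (h0 : ns 0 = 0)

noncomputable def telJunk (m : ℕ) : (B.Telescope ns hmono h0).E m :=
  ((B.Telescope ns hmono h0).hasOut m
    (Classical.choice ((B.Telescope ns hmono h0).nonV m))).choose

noncomputable def teleSegFun (a c : ℕ) (f : ∀ i, B.E i)
    (hchain : ∀ j, ns a ≤ j → j + 1 < ns (c + 1) → B.tgt (f j) = B.src (f (j + 1)))
    (m : ℕ) : (B.Telescope ns hmono h0).E m :=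
  if h : a ≤ m ∧ m ≤ c then
    ⟨fun i => f (ns m + i.val), by
      intro i hi
      refine hchain (ns m + i) (le_trans (hmono.monotone h.1) (by omega)) ?_
      have h1 : ns (m + 1) ≤ ns (c + 1) := hmono.monotone (by omega)
      omega⟩
  else B.telJunk ns hmono h0 m

theorem teleSegFun_coord (a c : ℕ) (f : ∀ i, B.E i)
    (hchain : ∀ j, ns a ≤ j → j + 1 < ns (c + 1) → B.tgt (f j) = B.src (f (j + 1)))
    (m : ℕ) (h1 : a ≤ m) (h2 : m ≤ c) (i : Fin (ns (m + 1) - ns m)) :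
    (B.teleSegFun ns hmono h0 a c f hchain m).1 i = f (ns m + i.val) := by
  unfold teleSegFun
  simp [h1, h2]

theorem tele_simple (hs : B.Simple) : (B.Telescope ns hmono h0).Simple := by
  obtain ⟨ms, hms, hms0, hfc⟩ := B.simple_fullConn hs
  set ls : ℕ → ℕ := fun l => Nat.rec 0 (fun _ prev => max (prev + 1) (ms (ns prev + 1))) l
    with hls
  have hls0 : ls 0 = 0 := rfl
  have hlss : ∀ l, ls (l + 1) = max (ls l + 1) (ms (ns (ls l) + 1)) := fun l => rfl
  have hlsmono : StrictMono ls := by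
    apply strictMono_nat_of_lt_succ
    intro l
    rw [hlss l]
    omega
  have key : ∀ l, B.FullConn (ns (ls l)) (ns (ls (l + 1)) - 1) := by
    intro l
    have hbase := hfc (ns (ls l))
    have h1 : ms (ns (ls l)) < ms (ns (ls l) + 1) := hms (by omega)
    have h2 : ns (ls l) ≤ ms (ns (ls l)) := sm_le_apply hms hms0 _
    have h3 : ms (ns (ls l) + 1) ≤ ls (l + 1) := by rw [hlss l]; omega
    have h4 : ls (l + 1) ≤ ns (ls (l + 1)) := sm_le_apply hmono h0 _
    exact B.fullConn_extend (by omega) hbase (by omega) (by omega)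
  refine ⟨ls, hlsmono, hls0, ?_⟩
  intro l c hc v w
  have hcl : ls (l + 1) = c + 1 := hc
  have hnc : 1 ≤ ns (c + 1) := by
    have : ns 0 < ns (c + 1) := hmono (by omega)
    omega
  have hfc' : B.FullConn (ns (ls l)) (ns (c + 1) - 1) := by
    rw [← hcl]; exact key l
  obtain ⟨f, hseg, hsrc, htgt⟩ := hfc' v
    (B.castV (show ns (c + 1) = (ns (c + 1) - 1) + 1 by omega) w)
  have hchain : ∀ j, ns (ls l) ≤ j → j + 1 < ns (c + 1) → B.tgt (f j) = B.src (f (j + 1)) :=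
    fun j hj1 hj2 => hseg j hj1 (by omega)
  have hlc : ls l ≤ c := by have := hlsmono (show l < l + 1 by omega); omega
  refine ⟨B.teleSegFun ns hmono h0 (ls l) c f hchain, ?_, ?_, ?_⟩
  · -- SegOn
    intro m hm1 hm2
    have hm2' : m + 1 ≤ c := by omega
    have hD : ns (m + 1) - ns m - 1 < ns (m + 1) - ns m := by
      have := hmono (show m < m + 1 by omega); omega
    show B.castV _ (B.tgt ((B.teleSegFun ns hmono h0 (ls l) c f hchain m).1
        ⟨ns (m + 1) - ns m - 1, hD⟩)) =
      B.src ((B.teleSegFun ns hmono h0 (ls l) c f hchain (m + 1)).1 ⟨0, _⟩)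
    rw [B.teleSegFun_coord ns hmono h0 (ls l) c f hchain m hm1 (by omega),
        B.teleSegFun_coord ns hmono h0 (ls l) c f hchain (m + 1) (by omega) hm2']
    apply B.castV_eq_of_heq
    have hstep := hchain (ns (m + 1) - 1)
      (le_trans (hmono.monotone hm1) (by have := hmono (show m < m + 1 by omega); omega))
      (by have h5 : ns (m + 1) < ns (c + 1) := hmono (by omega)
          have := hmono (show m < m + 1 by omega); omega)
    have he1 : HEq (B.tgt (f (ns m + (ns (m + 1) - ns m - 1)))) (B.tgt (f (ns (m + 1) - 1))) :=
      B.tgt_heq (by have := hmono (show m < m + 1 by omega); omega)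
        (dep_heq f (by have := hmono (show m < m + 1 by omega); omega))
    rw [hstep] at he1
    refine he1.trans ?_
    exact B.src_heq
      (by simp only [Fin.val_mk]; have := hmono (show m < m + 1 by omega); omega)
      (dep_heq f (by simp only [Fin.val_mk]; have := hmono (show m < m + 1 by omega); omega))
  · -- src
    show B.src ((B.teleSegFun ns hmono h0 (ls l) c f hchain (ls l)).1 ⟨0, _⟩) = v
    rw [B.teleSegFun_coord ns hmono h0 (ls l) c f hchain (ls l) le_rfl hlc]
    exact hsrc
  · -- tgt
    have hD : ns (c + 1) - ns c - 1 < ns (c + 1) - ns c := by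
      have := hmono (show c < c + 1 by omega); omega
    show B.castV _ (B.tgt ((B.teleSegFun ns hmono h0 (ls l) c f hchain c).1
        ⟨ns (c + 1) - ns c - 1, hD⟩)) = w
    rw [B.teleSegFun_coord ns hmono h0 (ls l) c f hchain c hlc le_rfl]
    apply B.castV_eq_of_heq
    have he1 : HEq (B.tgt (f (ns c + (ns (c + 1) - ns c - 1)))) (B.tgt (f (ns (c + 1) - 1))) :=
      B.tgt_heq (by have := hmono (show c < c + 1 by omega); omega)
        (dep_heq f (by have := hmono (show c < c + 1 by omega); omega))
    rw [htgt] at he1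
    exact he1.trans (B.castV_heq _ w)


end BDiagram
theorem equiv_conj_zpow {α β : Type} (φ : α ≃ β) (T : α ≃ α) (T' : β ≃ β)
    (h : ∀ x, φ (T x) = T' (φ x)) (m : ℤ) (x : α) :
    φ (((T : Equiv.Perm α) ^ m) x) = ((T' : Equiv.Perm β) ^ m) (φ x) := by
  have hnat : ∀ (n : ℕ) (x : α), φ (((T : Equiv.Perm α) ^ n) x)
      = ((T' : Equiv.Perm β) ^ n) (φ x) := by
    intro n
    induction n with
    | zero => intro x; simp
    | succ n ih =>
        intro x
        rw [pow_succ, pow_succ, Equiv.Perm.mul_apply, Equiv.Perm.mul_apply, ih, h]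
  have hinv : ∀ (n : ℕ) (x : α), φ ((((T : Equiv.Perm α) ^ (n + 1))⁻¹) x)
      = (((T' : Equiv.Perm β) ^ (n + 1))⁻¹) (φ x) := by
    intro n x
    have h1 := hnat (n + 1) ((((T : Equiv.Perm α) ^ (n + 1))⁻¹) x)
    rw [Equiv.Perm.coe_inv, Equiv.apply_symm_apply] at h1
    have h2 := congrArg (fun z => (((T' : Equiv.Perm β) ^ (n + 1))⁻¹) z) h1
    rw [Equiv.Perm.coe_inv, Equiv.symm_apply_apply] at h2
    exact h2.symm
  rcases m with n | n
  · exact hnat n x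
  · rw [zpow_negSucc, zpow_negSucc]
    exact hinv n x

namespace BDiagram

variable (B : BDiagram) (ns : ℕ → ℕ) (hmono : StrictMono ns) (h0 : ns 0 = 0)

theorem iterZ_teleVershik (T : B.PathSpace ≃ B.PathSpace) (m : ℤ) (x : B.PathSpace) :
    (B.Telescope ns hmono h0).iterZ (B.teleVershik ns hmono h0 T) m
        (B.teleMap ns hmono h0 x)
      = B.teleMap ns hmono h0 (B.iterZ T m x) :=
  (equiv_conj_zpow (B.teleEquiv ns hmono h0) T (B.teleVershik ns hmono h0 T)
    (fun x => (B.teleVershik_comm ns hmono h0 T x).symm) m x).symm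

theorem sameCoding_mono {T : B.PathSpace ≃ B.PathSpace} {k k' : ℕ} (h : k' ≤ k)
    {x y : B.PathSpace} (hs : B.SameCoding T k x y) : B.SameCoding T k' x y :=
  fun m i hi => hs m i (by omega)

theorem sameCoding_teleMap (T : B.PathSpace ≃ B.PathSpace) (k : ℕ) (x y : B.PathSpace) :
    (B.Telescope ns hmono h0).SameCoding (B.teleVershik ns hmono h0 T) k
        (B.teleMap ns hmono h0 x) (B.teleMap ns hmono h0 y)
      ↔ B.SameCoding T (ns k) x y := by
  constructor
  · intro hs m n hn
    obtain ⟨l, hl⟩ : ∃ l, blk ns n = l := ⟨_, rfl⟩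
    have h1 : ns l ≤ n := hl ▸ blk_le hmono h0 n
    have h2 : n < ns (l + 1) := hl ▸ lt_blk hmono h0 n
    have hlk : l < k := by
      by_contra hc
      push_neg at hc
      have : ns k ≤ ns l := hmono.monotone hc
      omega
    have hb := hs m l hlk
    rw [B.iterZ_teleVershik ns hmono h0 T m x, B.iterZ_teleVershik ns hmono h0 T m y] at hb
    exact B.teleMap_block_inj ns hmono h0 l hb n h1 h2
  · intro hs m l hl
    rw [B.iterZ_teleVershik ns hmono h0 T m x, B.iterZ_teleVershik ns hmono h0 T m y]
    apply B.teleMap_block_ext ns hmono h0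
    intro n hn1 hn2
    have : ns (l + 1) ≤ ns k := hmono.monotone (by omega)
    exact hs m n (by omega)

theorem depthPair_teleMap (T : B.PathSpace ≃ B.PathSpace) (k : ℕ) (x y : B.PathSpace)
    (hd : B.DepthPair T (ns k) x y)
    (hd2 : ¬ B.SameCoding T (ns k + 1) x y) :
    (B.Telescope ns hmono h0).DepthPair (B.teleVershik ns hmono h0 T) k
      (B.teleMap ns hmono h0 x) (B.teleMap ns hmono h0 y) := by
  obtain ⟨hne, hsc, -⟩ := hd
  refine ⟨?_, ?_, ?_⟩
  · intro hc
    apply hne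
    have := congrArg (B.teleInv ns hmono h0) hc
    rwa [B.teleInv_teleMap ns hmono h0, B.teleInv_teleMap ns hmono h0] at this
  · exact (B.sameCoding_teleMap ns hmono h0 T k x y).2 hsc
  · intro hc
    apply hd2
    have h1 := (B.sameCoding_teleMap ns hmono h0 T (k + 1) x y).1 hc
    have h2 : ns k + 1 ≤ ns (k + 1) := hmono (by omega)
    exact B.sameCoding_mono (by omega) h1

theorem hasCut_teleMap (T : B.PathSpace ≃ B.PathSpace) (j : ℕ) (x y : B.PathSpace)
    (hc : B.HasCut T (ns j) x y) :
    (B.Telescope ns hmono h0).HasCut (B.teleVershik ns hmono h0 T) j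
      (B.teleMap ns hmono h0 x) (B.teleMap ns hmono h0 y) := by
  obtain ⟨m, hx, hy⟩ := hc
  refine ⟨m, ?_, ?_⟩ <;>
  · intro l hl
    rw [B.iterZ_teleVershik ns hmono h0]
    rw [B.telE_isMinEdge_iff ns hmono h0]
    intro i
    rw [B.teleMap_coord ns hmono h0]
    have h1 : ns (l + 1) ≤ ns j := hmono.monotone (by omega)
    have h2 : ns l + i.val < ns j := by have := i.isLt; omega
    first
    | exact hx _ h2
    | exact hy _ h2

end BDiagram
namespace BDiagram

variable (B : BDiagram)

theorem continuous_coord (n : ℕ) :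
    @Continuous _ _ B.pathTop ⊥ (fun x : B.PathSpace => x.1 n) := by
  letI : ∀ m, TopologicalSpace (B.E m) := fun _ => ⊥
  letI tPi : TopologicalSpace (∀ m, B.E m) := Pi.topologicalSpace
  letI : TopologicalSpace B.PathSpace := B.pathTop
  exact Continuous.comp (continuous_apply n) continuous_induced_dom

theorem isOpen_coord_set (n : ℕ) (s : Set (B.E n)) :
    @IsOpen _ B.pathTop {x : B.PathSpace | x.1 n ∈ s} := by
  letI : TopologicalSpace (B.E n) := ⊥
  letI : TopologicalSpace B.PathSpace := B.pathTop
  haveI : DiscreteTopology (B.E n) := ⟨rfl⟩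
  exact (B.continuous_coord n).isOpen_preimage s (isOpen_discrete s)

theorem isClosed_coord_set (n : ℕ) (s : Set (B.E n)) :
    @IsClosed _ B.pathTop {x : B.PathSpace | x.1 n ∈ s} := by
  letI : TopologicalSpace B.PathSpace := B.pathTop
  rw [← isOpen_compl_iff]
  exact B.isOpen_coord_set n sᶜ

theorem isOpen_cyl (z : B.PathSpace) (r : ℕ) :
    @IsOpen _ B.pathTop {b : B.PathSpace | ∀ i, i < r → b.1 i = z.1 i} := by
  letI : TopologicalSpace B.PathSpace := B.pathTop
  have : {b : B.PathSpace | ∀ i, i < r → b.1 i = z.1 i}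
      = ⋂ i : Fin r, {b : B.PathSpace | b.1 i.val ∈ ({z.1 i.val} : Set (B.E i.val))} := by
    ext b
    simp only [Set.mem_setOf_eq, Set.mem_iInter, Set.mem_singleton_iff]
    exact ⟨fun h i => h i.val i.isLt, fun h i hi => h ⟨i, hi⟩⟩
  rw [this]
  exact isOpen_iInter_of_finite fun i => B.isOpen_coord_set i.val _

theorem exists_cyl_subset {U : Set B.PathSpace} (hU : @IsOpen _ B.pathTop U)
    {a : B.PathSpace} (ha : a ∈ U) :
    ∃ r, ∀ b : B.PathSpace, (∀ i, i < r → b.1 i = a.1 i) → b ∈ U := by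
  letI : ∀ m, TopologicalSpace (B.E m) := fun _ => ⊥
  letI tPi : TopologicalSpace (∀ m, B.E m) := Pi.topologicalSpace
  letI : TopologicalSpace B.PathSpace := B.pathTop
  rw [pathTop, isOpen_induced_iff] at hU
  obtain ⟨V, hV, hVU⟩ := hU
  have haV : a.1 ∈ V := by rw [← hVU] at ha; exact ha
  rw [isOpen_pi_iff] at hV
  obtain ⟨I, u, hu, hIV⟩ := hV a.1 haV
  refine ⟨I.sup id + 1, fun b hb => ?_⟩
  have hbV : b.1 ∈ V := by
    apply hIV
    intro i hi
    have : i ≤ I.sup id := Finset.le_sup (f := id) hi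
    rw [hb i (by omega)]
    exact (hu i hi).2
  rw [← hVU]
  exact hbV

theorem compactSpace_pathSpace : @CompactSpace B.PathSpace B.pathTop := by
  letI : ∀ m, TopologicalSpace (B.E m) := fun _ => ⊥
  letI : ∀ m, TopologicalSpace (B.V m) := fun _ => ⊥
  haveI : ∀ m, DiscreteTopology (B.E m) := fun _ => ⟨rfl⟩
  haveI : ∀ m, DiscreteTopology (B.V m) := fun _ => ⟨rfl⟩
  haveI : ∀ m, Finite (B.E m) := fun m => @Finite.of_fintype _ (B.fintE m)
  letI tPi : TopologicalSpace (∀ m, B.E m) := Pi.topologicalSpace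
  letI : TopologicalSpace B.PathSpace := B.pathTop
  haveI : CompactSpace (∀ m, B.E m) := Pi.compactSpace
  have hclosed : IsClosed {x : ∀ m, B.E m | ∀ n, B.tgt (x n) = B.src (x (n + 1))} := by
    have : {x : ∀ m, B.E m | ∀ n, B.tgt (x n) = B.src (x (n + 1))}
        = ⋂ n, {x : ∀ m, B.E m | B.tgt (x n) = B.src (x (n + 1))} := by
      ext x; simp [Set.mem_iInter]
    rw [this]
    apply isClosed_iInter
    intro n
    have hc : Continuous (fun x : ∀ m, B.E m => (B.tgt (x n), B.src (x (n + 1)))) := by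
      apply Continuous.prodMk
      · exact Continuous.comp continuous_of_discreteTopology (continuous_apply n)
      · exact Continuous.comp continuous_of_discreteTopology (continuous_apply (n + 1))
    have : {x : ∀ m, B.E m | B.tgt (x n) = B.src (x (n + 1))}
        = (fun x : ∀ m, B.E m => (B.tgt (x n), B.src (x (n + 1)))) ⁻¹'
            {p : B.V (n + 1) × B.V (n + 1) | p.1 = p.2} := rfl
    rw [this]
    exact IsClosed.preimage hc (isClosed_discrete _)
  have hcomp : IsCompact {x : ∀ m, B.E m | ∀ n, B.tgt (x n) = B.src (x (n + 1))} :=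
    hclosed.isCompact
  exact isCompact_iff_compactSpace.mp hcomp

end BDiagram
namespace BDiagram

/-- uniform continuity on the compact path space. -/
theorem uniform_cont {B B' : BDiagram} (ψ : B'.PathSpace → B.PathSpace)
    (hψ : @Continuous _ _ B'.pathTop B.pathTop ψ) (k : ℕ) :
    ∃ r, ∀ a b : B'.PathSpace, (∀ i, i < r → a.1 i = b.1 i) →
      ∀ i, i < k → (ψ a).1 i = (ψ b).1 i := by
  classical
  letI : TopologicalSpace B'.PathSpace := B'.pathTop
  letI : TopologicalSpace B.PathSpace := B.pathTop
  haveI : CompactSpace B'.PathSpace := B'.compactSpace_pathSpace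
  have hUopen : ∀ a : B'.PathSpace,
      @IsOpen _ B'.pathTop {b | ∀ i, i < k → (ψ b).1 i = (ψ a).1 i} := by
    intro a
    have : {b : B'.PathSpace | ∀ i, i < k → (ψ b).1 i = (ψ a).1 i}
        = ψ ⁻¹' {c : B.PathSpace | ∀ i, i < k → c.1 i = (ψ a).1 i} := rfl
    rw [this]
    exact (B.isOpen_cyl (ψ a) k).preimage hψ
  have hsel : ∀ a : B'.PathSpace, ∃ r, ∀ b : B'.PathSpace,
      (∀ i, i < r → b.1 i = a.1 i) → ∀ i, i < k → (ψ b).1 i = (ψ a).1 i := by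
    intro a
    obtain ⟨r, hr⟩ := B'.exists_cyl_subset (hUopen a) (a := a) (fun i _ => rfl)
    exact ⟨r, hr⟩
  choose r hr using hsel
  have hcover : (Set.univ : Set B'.PathSpace)
      ⊆ ⋃ a : B'.PathSpace, {b | ∀ i, i < r a → b.1 i = a.1 i} := by
    intro a _
    exact Set.mem_iUnion.2 ⟨a, fun i _ => rfl⟩
  obtain ⟨t, ht⟩ := isCompact_univ.elim_finite_subcover
    (fun a : B'.PathSpace => {b : B'.PathSpace | ∀ i, i < r a → b.1 i = a.1 i})
    (fun a => B'.isOpen_cyl a (r a)) hcover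
  refine ⟨t.sup r, fun a b hab i hik => ?_⟩
  obtain ⟨c, hct, hac⟩ : ∃ c ∈ t, ∀ i, i < r c → a.1 i = c.1 i := by
    have := ht (Set.mem_univ a)
    rw [Set.mem_iUnion₂] at this
    obtain ⟨c, hct, hc⟩ := this
    exact ⟨c, hct, hc⟩
  have hrc : r c ≤ t.sup r := Finset.le_sup hct
  have hbc : ∀ i, i < r c → b.1 i = c.1 i := by
    intro i hi
    rw [← hab i (by omega)]
    exact hac i hi
  rw [hr c a hac i hik, hr c b hbc i hik]

/-- the set of paths minimal up to level `j` is closed. -/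
theorem isClosed_minSet (B : BDiagram) (j : ℕ) :
    @IsClosed _ B.pathTop {z : B.PathSpace | ∀ i, i < j → B.IsMinEdge (z.1 i)} := by
  letI : TopologicalSpace B.PathSpace := B.pathTop
  have : {z : B.PathSpace | ∀ i, i < j → B.IsMinEdge (z.1 i)}
      = ⋂ i : Fin j, {z : B.PathSpace | z.1 i.val ∈ {e : B.E i.val | B.IsMinEdge e}} := by
    ext z
    simp only [Set.mem_setOf_eq, Set.mem_iInter]
    exact ⟨fun h i => h i.val i.isLt, fun h i hi => h ⟨i, hi⟩⟩
  rw [this]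
  exact isClosed_iInter fun i => B.isClosed_coord_set i.val _

theorem isOpen_minSet (B : BDiagram) (j : ℕ) :
    @IsOpen _ B.pathTop {z : B.PathSpace | ∀ i, i < j → B.IsMinEdge (z.1 i)} := by
  letI : TopologicalSpace B.PathSpace := B.pathTop
  have : {z : B.PathSpace | ∀ i, i < j → B.IsMinEdge (z.1 i)}
      = ⋂ i : Fin j, {z : B.PathSpace | z.1 i.val ∈ {e : B.E i.val | B.IsMinEdge e}} := by
    ext z
    simp only [Set.mem_setOf_eq, Set.mem_iInter]
    exact ⟨fun h i => h i.val i.isLt, fun h i hi => h ⟨i, hi⟩⟩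
  rw [this]
  exact isOpen_iInter_of_finite fun i => B.isOpen_coord_set i.val _

/-- transfer of "minimal initial segments" through a continuous min-path-preserving
map. -/
theorem min_transfer {B B' : BDiagram} (G : B'.PathSpace → B.PathSpace)
    (hG : @Continuous _ _ B'.pathTop B.pathTop G)
    (hmin : ∀ z, B'.IsMinPath z → B.IsMinPath (G z)) (j : ℕ) :
    ∃ j', ∀ z : B'.PathSpace, (∀ i, i < j' → B'.IsMinEdge (z.1 i)) →
      ∀ i, i < j → B.IsMinEdge ((G z).1 i) := by
  classical
  letI : TopologicalSpace B'.PathSpace := B'.pathTop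
  letI : TopologicalSpace B.PathSpace := B.pathTop
  haveI : CompactSpace B'.PathSpace := B'.compactSpace_pathSpace
  set U : Set B'.PathSpace := G ⁻¹' {x : B.PathSpace | ∀ i, i < j → B.IsMinEdge (x.1 i)}
    with hU
  have hUopen : IsOpen U := (B.isOpen_minSet j).preimage hG
  set C : ℕ → Set B'.PathSpace :=
    fun j' => {z : B'.PathSpace | ∀ i, i < j' → B'.IsMinEdge (z.1 i)} with hC
  have hCclosed : ∀ j', IsClosed (C j') := fun j' => B'.isClosed_minSet j'
  have hinter : Uᶜ ∩ ⋂ j', C j' = ∅ := by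
    rw [Set.eq_empty_iff_forall_notMem]
    rintro z ⟨hzU, hzC⟩
    rw [Set.mem_iInter] at hzC
    apply hzU
    show G z ∈ {x : B.PathSpace | ∀ i, i < j → B.IsMinEdge (x.1 i)}
    have hzmin : B'.IsMinPath z := fun n => hzC (n + 1) n (by omega)
    exact fun i _ => hmin z hzmin i
  obtain ⟨t, ht⟩ := (IsClosed.isCompact (isClosed_compl_iff.2 hUopen)).elim_finite_subfamily_closed
    C hCclosed hinter
  refine ⟨t.sup id, fun z hz i hij => ?_⟩
  have hzC : z ∈ ⋂ j' ∈ t, C j' := by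
    rw [Set.mem_iInter₂]
    intro j' hj'
    intro i' hi'
    exact hz i' (by have := Finset.le_sup (f := id) hj'; simp at this; omega)
  have hzU : z ∈ U := by
    by_contra hc
    rw [Set.eq_empty_iff_forall_notMem] at ht
    exact ht z ⟨hc, hzC⟩
  exact hzU i hij

variable (B : BDiagram) (ns : ℕ → ℕ) (hmono : StrictMono ns) (h0 : ns 0 = 0)

theorem continuous_teleMap :
    @Continuous _ _ B.pathTop (B.Telescope ns hmono h0).pathTop (B.teleMap ns hmono h0) := by
  classical
  letI : ∀ m, TopologicalSpace (B.E m) := fun _ => ⊥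
  letI : ∀ m, TopologicalSpace ((B.Telescope ns hmono h0).E m) := fun _ => ⊥
  haveI : ∀ m, DiscreteTopology ((B.Telescope ns hmono h0).E m) := fun _ => ⟨rfl⟩
  letI : TopologicalSpace B.PathSpace := B.pathTop
  letI : TopologicalSpace (B.Telescope ns hmono h0).PathSpace :=
    (B.Telescope ns hmono h0).pathTop
  apply continuous_induced_rng.2
  apply continuous_pi
  intro l
  rw [continuous_discrete_rng]
  intro b
  have : (fun x : B.PathSpace => (B.teleMap ns hmono h0 x).1 l) ⁻¹' {b}
      = ⋂ i : Fin (ns (l + 1) - ns l),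
          {x : B.PathSpace | x.1 (ns l + i.val) ∈ ({b.1 i} : Set (B.E (ns l + i.val)))} := by
    ext x
    simp only [Set.mem_preimage, Set.mem_singleton_iff, Set.mem_iInter, Set.mem_setOf_eq]
    constructor
    · intro h i
      rw [← h]
      rfl
    · intro h
      apply Subtype.ext
      funext i
      exact h i
  exact this ▸ isOpen_iInter_of_finite fun i => B.isOpen_coord_set (ns l + i.val) _

theorem continuous_teleInv :
    @Continuous _ _ (B.Telescope ns hmono h0).pathTop B.pathTop (B.teleInv ns hmono h0) := by
  classical
  letI : ∀ m, TopologicalSpace (B.E m) := fun _ => ⊥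
  letI : ∀ m, TopologicalSpace ((B.Telescope ns hmono h0).E m) := fun _ => ⊥
  haveI : ∀ m, DiscreteTopology ((B.Telescope ns hmono h0).E m) := fun _ => ⟨rfl⟩
  letI : TopologicalSpace B.PathSpace := B.pathTop
  letI : TopologicalSpace (B.Telescope ns hmono h0).PathSpace :=
    (B.Telescope ns hmono h0).pathTop
  apply continuous_induced_rng.2
  apply continuous_pi
  intro n
  have : (fun x : (B.Telescope ns hmono h0).PathSpace => (B.teleInv ns hmono h0 x).1 n)
      = (fun t : (B.Telescope ns hmono h0).E (blk ns n) =>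
          B.castE (show ns (blk ns n) + (n - ns (blk ns n)) = n by
              have := blk_le hmono h0 n; omega)
            (t.1 ⟨n - ns (blk ns n), by
              have h1 := blk_le hmono h0 n; have h2 := lt_blk hmono h0 n; omega⟩))
        ∘ (fun x => x.1 (blk ns n)) := rfl
  show Continuous (fun x : (B.Telescope ns hmono h0).PathSpace => (B.teleInv ns hmono h0 x).1 n)
  rw [this]
  exact Continuous.comp continuous_of_discreteTopology
    ((B.Telescope ns hmono h0).continuous_coord (blk ns n))

end BDiagram

/-- For a simple, properly ordered Bratteli–Vershik system the
following are equivalent: (1) for infinitely many `k ≥ 1` there is a depth `k`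
pair with a `j` cut for every `j > k`; (2) some telescoping of it is very well
timed; (3) it is conjugate to a very well timed system. -/
theorem veryWellTimed_tfae (S : BVSystem) :
    List.TFAE
      [∀ K : ℕ, ∃ k : ℕ, K ≤ k ∧ 1 ≤ k ∧
         ∃ x y : S.B.PathSpace, S.B.DepthPair S.T k x y ∧
           ∀ j : ℕ, k < j → S.B.HasCut S.T j x y,
       ∃ (ns : ℕ → ℕ) (hmono : StrictMono ns) (h0 : ns 0 = 0)
         (T' : (S.B.Telescope ns hmono h0).PathSpace ≃
            (S.B.Telescope ns hmono h0).PathSpace),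
         (S.B.Telescope ns hmono h0).IsVershik T' ∧
         (S.B.Telescope ns hmono h0).VeryWellTimed T',
       ∃ S' : BVSystem, Conjugate S S' ∧ S'.B.VeryWellTimed S'.T] := by
  tfae_have 1 → 2 := by
    intro h1
    set P : ℕ → Prop := fun k => ∃ x y : S.B.PathSpace, S.B.DepthPair S.T k x y ∧
      ∀ j : ℕ, k < j → S.B.HasCut S.T j x y with hP
    have h1' : ∀ K : ℕ, ∃ k : ℕ, K ≤ k ∧ 1 ≤ k ∧ P k := h1
    set nsf : ℕ → ℕ := fun l => Nat.rec 0 (fun _ prev => (h1' (prev + 1)).choose) l with hnsf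
    have hstep : ∀ l, nsf (l + 1) = (h1' (nsf l + 1)).choose := fun l => rfl
    have hm : StrictMono nsf := by
      apply strictMono_nat_of_lt_succ
      intro l
      have := (h1' (nsf l + 1)).choose_spec.1
      rw [hstep l]
      omega
    have hgood : ∀ l, P (nsf (l + 1)) := by
      intro l
      rw [hstep l]
      exact (h1' (nsf l + 1)).choose_spec.2.2
    refine ⟨nsf, hm, rfl, S.B.teleVershik nsf hm rfl S.T,
      S.B.teleVershik_isVershik nsf hm rfl S.vershik, ?_⟩
    intro k hk
    obtain ⟨k0, rfl⟩ : ∃ k0, k0 + 1 = k := ⟨k - 1, by omega⟩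
    obtain ⟨x, y, hd, hcuts⟩ := hgood k0
    refine ⟨S.B.teleMap nsf hm rfl x, S.B.teleMap nsf hm rfl y,
      S.B.depthPair_teleMap nsf hm rfl S.T (k0 + 1) x y hd hd.2.2, ?_⟩
    intro j hj
    exact S.B.hasCut_teleMap nsf hm rfl S.T j x y (hcuts (nsf j) (hm hj))
  tfae_have 2 → 3 := by
    rintro ⟨ns, hmono, h0, T', hv, hw⟩
    have hprop := S.B.tele_properlyOrdered ns hmono h0 S.proper
    have hsimp := S.B.tele_simple ns hmono h0 S.simple
    have huniq : T' = S.B.teleVershik ns hmono h0 S.T :=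
      (S.B.Telescope ns hmono h0).vershik_unique hprop hv
        (S.B.teleVershik_isVershik ns hmono h0 S.vershik)
    refine ⟨⟨S.B.Telescope ns hmono h0, T', hprop, hsimp, hv⟩,
      ⟨S.B.teleEquiv ns hmono h0, S.B.continuous_teleMap ns hmono h0,
        S.B.continuous_teleInv ns hmono h0, ?_, ?_⟩, hw⟩
    · intro x
      show S.B.teleMap ns hmono h0 (S.T x) = T' (S.B.teleMap ns hmono h0 x)
      rw [huniq, S.B.teleVershik_comm ns hmono h0 S.T x]
    · intro x hx
      exact (S.B.isMinPath_teleMap ns hmono h0 x).2 hx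
  tfae_have 3 → 1 := by
    classical
    rintro ⟨S', ⟨φ, hφc, hφsc, hφT, hφmin⟩, hvwt⟩
    intro K
    -- minimal path transfer for φ.symm
    obtain ⟨⟨x1min, h1min, h1uniq⟩, -⟩ := S.proper
    obtain ⟨⟨x2min, h2min, h2uniq⟩, -⟩ := S'.proper
    have hGmin : ∀ z, S'.B.IsMinPath z → S.B.IsMinPath (φ.symm z) := by
      intro z hz
      have h1 : z = x2min := h2uniq z hz
      have h2 : φ x1min = x2min := h2uniq _ (hφmin x1min h1min)
      rw [h1, ← h2, Equiv.symm_apply_apply]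
      exact h1min
    have hGequiv : ∀ (m : ℤ) (x' : S'.B.PathSpace),
        φ.symm (S'.B.iterZ S'.T m x') = S.B.iterZ S.T m (φ.symm x') := by
      intro m x'
      have h1 := equiv_conj_zpow φ S.T S'.T hφT m (φ.symm x')
      rw [Equiv.apply_symm_apply] at h1
      have h2 := congrArg φ.symm h1
      rw [Equiv.symm_apply_apply] at h2
      exact h2.symm
    -- uniform continuity radius for level K+1
    obtain ⟨r, hr⟩ := BDiagram.uniform_cont (fun z => φ.symm z) hφsc (K + 1)
    set k' : ℕ := max r 1 with hk'
    obtain ⟨x', y', hd', hcuts'⟩ := hvwt k' (by omega)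
    set x : S.B.PathSpace := φ.symm x' with hx
    set y : S.B.PathSpace := φ.symm y' with hy
    obtain ⟨hne', hsc', hnsc'⟩ := hd'
    have hne : x ≠ y := fun h => hne' (φ.symm.injective h)
    have hSC : S.B.SameCoding S.T (K + 1) x y := by
      intro m i hi
      rw [hx, hy, ← hGequiv m x', ← hGequiv m y']
      refine hr (S'.B.iterZ S'.T m x') (S'.B.iterZ S'.T m y') ?_ i hi
      intro i' hi'
      exact hsc' m i' (by omega)
    have hbound : ∃ i0, x.1 i0 ≠ y.1 i0 := by
      by_contra hc
      push_neg at hc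
      exact hne (S.B.path_ext hc)
    obtain ⟨i0, hi0⟩ := hbound
    have hnotSC : ∀ d, i0 < d → ¬ S.B.SameCoding S.T d x y := by
      intro d hd hc
      apply hi0
      have := hc 0 i0 (by omega)
      simpa [BDiagram.iterZ] using this
    set Q : ℕ → Prop := fun d => S.B.SameCoding S.T d x y with hQ
    have hQb : ∀ d, Q d → d ≤ i0 := by
      intro d hd
      by_contra hc
      exact hnotSC d (by omega) hd
    set b : ℕ := i0 + K + 1 with hb
    set d : ℕ := Nat.findGreatest Q b with hdd
    have hQK : Q (K + 1) := hSC
    have hdspec : Q d := Nat.findGreatest_spec (m := K + 1) (by omega) hQK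
    have hdge : K + 1 ≤ d := Nat.le_findGreatest (by omega) hQK
    have hdle : d ≤ i0 := hQb d hdspec
    have hdsucc : ¬ Q (d + 1) := by
      have h9 : Nat.findGreatest Q b < d + 1 := by omega
      exact Nat.findGreatest_is_greatest h9 (by omega)
    refine ⟨d, by omega, by omega, x, y, ⟨hne, hdspec, hdsucc⟩, ?_⟩
    intro j hj
    obtain ⟨j', hj'⟩ := BDiagram.min_transfer (fun z => φ.symm z) hφsc hGmin j
    obtain ⟨m, hmx, hmy⟩ := hcuts' (max (k' + 1) j') (by omega)
    refine ⟨m, ?_, ?_⟩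
    · intro i hij
      rw [hx, ← hGequiv m x']
      exact hj' (S'.B.iterZ S'.T m x') (fun i' hi' => hmx i' (by omega)) i hij
    · intro i hij
      rw [hy, ← hGequiv m y']
      exact hj' (S'.B.iterZ S'.T m y') (fun i' hi' => hmy i' (by omega)) i hij
  tfae_finish
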